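/- arXiv:2202.04729 — 4 statements merged into one kernel-verified Lean document; each statement's English description precedes it below -/
import Mathlib

section
/- Let n ∈ ℕ and (κ,k) ∈ L_n. Then the general fractional derivative D_{(k)} is a left-inverse of the general fractional integral I_{(κ)} on C_{-1}(0,∞): for every f ∈ C_{-1}(0,∞) and every t > 0, (D_{(k)} I_{(κ)} f)(t) = (d^n/dt^n)(k*(κ*f))(t) = f(t). -/
noncomputable section

/-- Laplace convolution `(f*g)(t) = ∫_0^t f(t-τ) g(τ) dτ`. -/
def conv (f g : ℝ → ℝ) : ℝ → ℝ := fun t => ∫ τ in (0:ℝ)..t, f (t - τ) * g τ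

/-- The space `C_{-1}(0,∞)`: functions of the form `t^q f₁(t)` with `q > -1`,
`f₁` continuous on `[0,∞)`. -/
def Cm1 (f : ℝ → ℝ) : Prop :=
  ∃ q : ℝ, -1 < q ∧ ∃ f₁ : ℝ → ℝ, ContinuousOn f₁ (Set.Ici 0) ∧
    ∀ t : ℝ, 0 < t → f t = t ^ q * f₁ t

/-- The subspace `C_{-1,0}(0,∞)`: as above with `-1 < q < 0`. -/
def Cm10 (f : ℝ → ℝ) : Prop :=
  ∃ q : ℝ, -1 < q ∧ q < 0 ∧ ∃ f₁ : ℝ → ℝ, ContinuousOn f₁ (Set.Ici 0) ∧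
    ∀ t : ℝ, 0 < t → f t = t ^ q * f₁ t

/-- `h_p(t) = t^(p-1)/Γ(p)`. -/
def hker (p : ℝ) : ℝ → ℝ := fun t => t ^ (p - 1) / Real.Gamma p

/-- The Sonine kernel class `L_n`: `κ ∈ C_{-1}`, `k ∈ C_{-1,0}`, and
`(κ*k)(t) = h_n(t)` for all `t > 0`. -/
def SonineL (n : ℕ) (κ k : ℝ → ℝ) : Prop :=
  Cm1 κ ∧ Cm10 k ∧ ∀ t : ℝ, 0 < t → conv κ k t = hker n t

/-- The general fractional integral `(I_{(κ)} f)(t) = (κ*f)(t)`. -/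
def GFI (κ f : ℝ → ℝ) : ℝ → ℝ := conv κ f

/-- The general fractional derivative of Riemann–Liouville type
`(D_{(k)} f)(t) = (d^n/dt^n)(k*f)(t)`. -/
def GFD (n : ℕ) (k f : ℝ → ℝ) : ℝ → ℝ := iteratedDeriv n (conv k f)


namespace GFDaux

open MeasureTheory Set Real

def trunc (q : ℝ) (g : ℝ → ℝ) : ℝ → ℝ := fun x => if 0 < x then x ^ q * g x else 0

lemma trunc_nonpos {q : ℝ} {g : ℝ → ℝ} {x : ℝ} (h : x ≤ 0) : trunc q g x = 0 := by
  simp [trunc, not_lt.2 h]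

lemma trunc_pos {q : ℝ} {g : ℝ → ℝ} {x : ℝ} (h : 0 < x) : trunc q g x = x ^ q * g x := by
  simp [trunc, h]

lemma measurable_trunc {q : ℝ} {g : ℝ → ℝ} (hg : Continuous g) : Measurable (trunc q g) := by
  have : trunc q g = fun x => if 0 < x then Real.exp (Real.log x * q) * g x else 0 := by
    funext x
    by_cases h : 0 < x
    · simp only [trunc, h, if_true, Real.rpow_def_of_pos h]
    · simp [trunc, h]
  rw [this]
  exact Measurable.ite measurableSet_Ioi
    (((Real.measurable_log.mul measurable_const).exp).mul hg.measurable) measurable_const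

lemma continuousAt_trunc {q : ℝ} {g : ℝ → ℝ} (hg : Continuous g) {x : ℝ} (hx : 0 < x) :
    ContinuousAt (trunc q g) x := by
  have h1 : ContinuousAt (fun y : ℝ => y ^ q * g y) x :=
    ((Real.continuousAt_rpow_const x q (Or.inl hx.ne')).mul hg.continuousAt)
  apply h1.congr
  filter_upwards [isOpen_Ioi.mem_nhds hx] with y hy
  exact (trunc_pos hy).symm

lemma exists_bound {g : ℝ → ℝ} (hg : Continuous g) (T : ℝ) :
    ∃ M : ℝ, 0 ≤ M ∧ ∀ x ∈ Icc (0:ℝ) T, |g x| ≤ M := by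
  obtain ⟨M, hM⟩ := isCompact_Icc.exists_bound_of_continuousOn (hg.continuousOn (s := Icc (0:ℝ) T))
  exact ⟨max M 0, le_max_right _ _, fun x hx => (hM x hx).trans (le_max_left _ _)⟩


lemma contOn_rpow_pos {a : ℝ} {s : Set ℝ} (h : ∀ x ∈ s, 0 < x) :
    ContinuousOn (fun x : ℝ => x ^ a) s := by
  intro x hx
  exact (Real.continuousAt_rpow_const x a (Or.inl (h x hx).ne')).continuousWithinAt


lemma contOn_sub_rpow (a s : ℝ) {S : Set ℝ} (h : ∀ x ∈ S, 0 < s - x) :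
    ContinuousOn (fun x : ℝ => (s - x) ^ a) S := fun x hx =>
  (((Real.continuousAt_rpow_const _ a (Or.inl (h x hx).ne')).comp
    ((continuous_const.sub continuous_id).continuousAt)).continuousWithinAt)

lemma betaInt {a c : ℝ} (ha : -1 < a) (hc : -1 < c) (s : ℝ) :
    IntegrableOn (fun τ => (s - τ) ^ a * τ ^ c) (Ioo 0 s) volume := by
  rcases le_or_gt s 0 with hs | hs
  · rw [Ioo_eq_empty (by linarith)]; exact integrableOn_empty
  · have h2 : (0:ℝ) < s / 2 := by linarith
    have hsub : Ioo (0:ℝ) s ⊆ Ioc 0 (s/2) ∪ Ioo (s/2) s := by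
      intro x hx
      rcases le_or_gt x (s/2) with h | h
      · exact Or.inl ⟨hx.1, h⟩
      · exact Or.inr ⟨h, hx.2⟩
    refine IntegrableOn.mono_set ?_ hsub
    apply IntegrableOn.union
    · -- on Ioc 0 (s/2)
      have hbase : IntegrableOn (fun τ : ℝ => τ ^ c) (Ioc 0 (s/2)) volume :=
        (intervalIntegral.intervalIntegrable_rpow' hc (a := 0) (b := s/2)).1
      have haesm : AEStronglyMeasurable (fun τ : ℝ => (s - τ) ^ a * τ ^ c)
          (volume.restrict (Ioc 0 (s/2))) := by
        apply ContinuousOn.aestronglyMeasurable _ measurableSet_Ioc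
        apply ContinuousOn.mul
        · exact contOn_sub_rpow a s (fun x hx => by
            simp only [mem_Ioc] at hx; linarith [hx.1, hx.2])
        · exact contOn_rpow_pos (fun x hx => hx.1)
      refine Integrable.mono' (hbase.const_mul (max (s ^ a) ((s/2) ^ a))) haesm ?_
      rw [ae_restrict_iff' measurableSet_Ioc]
      filter_upwards with τ hτ
      have hτ1 : 0 < τ := hτ.1
      have hτ2 : s / 2 ≤ s - τ := by linarith [hτ.2]
      have hsτ : 0 < s - τ := lt_of_lt_of_le h2 hτ2
      have hb : (s - τ) ^ a ≤ max (s ^ a) ((s/2) ^ a) := by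
        rcases le_or_gt 0 a with hA | hA
        · exact le_trans (Real.rpow_le_rpow hsτ.le (by linarith) hA) (le_max_left _ _)
        · exact le_trans (Real.rpow_le_rpow_of_nonpos h2 hτ2 hA.le) (le_max_right _ _)
      have h0 : (0:ℝ) ≤ (s - τ) ^ a * τ ^ c :=
        mul_nonneg (Real.rpow_nonneg hsτ.le _) (Real.rpow_nonneg hτ1.le _)
      rw [Real.norm_eq_abs, abs_of_nonneg h0]
      exact mul_le_mul_of_nonneg_right hb (Real.rpow_nonneg hτ1.le _)
    · -- on Ioo (s/2) s
      have hbase : IntegrableOn (fun τ : ℝ => (s - τ) ^ a) (Ioo (s/2) s) volume := by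
        have h1 : IntervalIntegrable (fun x : ℝ => x ^ a) volume 0 (s/2) :=
          intervalIntegral.intervalIntegrable_rpow' ha
        have h2' := h1.comp_sub_left s
        rw [sub_zero, show s - s/2 = s/2 by ring] at h2'
        exact (h2'.symm.1).mono_set Ioo_subset_Ioc_self
      have haesm : AEStronglyMeasurable (fun τ : ℝ => (s - τ) ^ a * τ ^ c)
          (volume.restrict (Ioo (s/2) s)) := by
        apply ContinuousOn.aestronglyMeasurable _ measurableSet_Ioo
        apply ContinuousOn.mul
        · exact contOn_sub_rpow a s (fun x hx => by
            simp only [mem_Ioo] at hx; linarith [hx.2])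
        · exact contOn_rpow_pos (fun x hx => lt_trans h2 hx.1)
      refine Integrable.mono' (hbase.const_mul (max (s ^ c) ((s/2) ^ c))) haesm ?_
      rw [ae_restrict_iff' measurableSet_Ioo]
      filter_upwards with τ hτ
      have hτ1 : (0:ℝ) < τ := lt_trans h2 hτ.1
      have hsτ : 0 < s - τ := by linarith [hτ.2]
      have hb : τ ^ c ≤ max (s ^ c) ((s/2) ^ c) := by
        rcases le_or_gt 0 c with hA | hA
        · exact le_trans (Real.rpow_le_rpow hτ1.le hτ.2.le hA) (le_max_left _ _)
        · exact le_trans (Real.rpow_le_rpow_of_nonpos h2 hτ.1.le hA.le) (le_max_right _ _)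
      have h0 : (0:ℝ) ≤ (s - τ) ^ a * τ ^ c :=
        mul_nonneg (Real.rpow_nonneg hsτ.le _) (Real.rpow_nonneg hτ1.le _)
      rw [Real.norm_eq_abs, abs_of_nonneg h0, mul_comm (max (s ^ c) ((s/2) ^ c))]
      exact mul_le_mul_of_nonneg_left hb (Real.rpow_nonneg hsτ.le _)


lemma betaBound {a c : ℝ} (ha : -1 < a) (hc : -1 < c) :
    ∃ K : ℝ, 0 ≤ K ∧ ∀ s : ℝ, 0 < s →
      (∫ τ in Ioo 0 s, (s - τ) ^ a * τ ^ c) ≤ K * s ^ (a + c + 1) := by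
  have ha1 : (0:ℝ) < a + 1 := by linarith
  have hc1 : (0:ℝ) < c + 1 := by linarith
  refine ⟨(1 + (1/2:ℝ) ^ a) * ((1/2:ℝ) ^ (c+1) / (c+1)) +
      (1 + (1/2:ℝ) ^ c) * ((1/2:ℝ) ^ (a+1) / (a+1)), ?_, ?_⟩
  · have := Real.rpow_nonneg (by norm_num : (0:ℝ) ≤ (1/2:ℝ))
    positivity
  intro s hs
  have h2 : (0:ℝ) < s / 2 := by linarith
  have hsplit : Ioo (0:ℝ) s = Ioc 0 (s/2) ∪ Ioo (s/2) s := by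
    ext x
    simp only [mem_Ioo, mem_union, mem_Ioc]
    constructor
    · rintro ⟨h1, h2'⟩
      rcases le_or_gt x (s/2) with h | h
      · exact Or.inl ⟨h1, h⟩
      · exact Or.inr ⟨h, h2'⟩
    · rintro (⟨h1, h⟩ | ⟨h, h2'⟩)
      · exact ⟨h1, by linarith⟩
      · exact ⟨by linarith, h2'⟩
  have hint := betaInt ha hc s
  have hdisj : Disjoint (Ioc (0:ℝ) (s/2)) (Ioo (s/2) s) := by
    apply Set.disjoint_left.2
    rintro x ⟨_, hx2⟩ ⟨hx3, _⟩
    exact absurd hx3 (not_lt.2 hx2)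
  have hi1 : IntegrableOn (fun τ => (s - τ) ^ a * τ ^ c) (Ioc 0 (s/2)) volume := by
    refine (betaInt ha hc s).mono_set ?_
    intro x hx; exact ⟨hx.1, by linarith [hx.2]⟩
  have hi2 : IntegrableOn (fun τ => (s - τ) ^ a * τ ^ c) (Ioo (s/2) s) volume := by
    refine (betaInt ha hc s).mono_set ?_
    intro x hx; exact ⟨by linarith [hx.1], hx.2⟩
  rw [hsplit, setIntegral_union hdisj measurableSet_Ioo hi1 hi2]
  -- bound each piece
  have hMa : ∀ τ ∈ Ioc (0:ℝ) (s/2), (s - τ) ^ a * τ ^ c ≤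
      (s ^ a * (1 + (1/2:ℝ) ^ a)) * τ ^ c := by
    intro τ hτ
    have hτ1 : 0 < τ := hτ.1
    have hτ2 : s / 2 ≤ s - τ := by linarith [hτ.2]
    have hsτ : 0 < s - τ := lt_of_lt_of_le h2 hτ2
    have hhalf : (s/2:ℝ) ^ a = s ^ a * (1/2:ℝ) ^ a := by
      rw [show (s/2:ℝ) = s * (1/2) by ring, Real.mul_rpow hs.le (by norm_num)]
    have hb : (s - τ) ^ a ≤ s ^ a * (1 + (1/2:ℝ) ^ a) := by
      have hs1 : (0:ℝ) ≤ s ^ a := Real.rpow_nonneg hs.le _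
      have hs2 : (0:ℝ) ≤ (1/2:ℝ) ^ a := Real.rpow_nonneg (by norm_num) _
      rcases le_or_gt 0 a with hA | hA
      · calc (s - τ) ^ a ≤ s ^ a := Real.rpow_le_rpow hsτ.le (by linarith) hA
          _ ≤ s ^ a * (1 + (1/2:ℝ) ^ a) := by nlinarith
      · calc (s - τ) ^ a ≤ (s/2) ^ a := Real.rpow_le_rpow_of_nonpos h2 hτ2 hA.le
          _ = s ^ a * (1/2:ℝ) ^ a := hhalf
          _ ≤ s ^ a * (1 + (1/2:ℝ) ^ a) := by nlinarith
    exact mul_le_mul_of_nonneg_right hb (Real.rpow_nonneg hτ1.le _)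
  have hMc : ∀ τ ∈ Ioo (s/2) s, (s - τ) ^ a * τ ^ c ≤
      (s ^ c * (1 + (1/2:ℝ) ^ c)) * (s - τ) ^ a := by
    intro τ hτ
    have hτ1 : (0:ℝ) < τ := lt_trans h2 hτ.1
    have hsτ : 0 < s - τ := by linarith [hτ.2]
    have hhalf : (s/2:ℝ) ^ c = s ^ c * (1/2:ℝ) ^ c := by
      rw [show (s/2:ℝ) = s * (1/2) by ring, Real.mul_rpow hs.le (by norm_num)]
    have hb : τ ^ c ≤ s ^ c * (1 + (1/2:ℝ) ^ c) := by
      have hs1 : (0:ℝ) ≤ s ^ c := Real.rpow_nonneg hs.le _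
      have hs2 : (0:ℝ) ≤ (1/2:ℝ) ^ c := Real.rpow_nonneg (by norm_num) _
      rcases le_or_gt 0 c with hA | hA
      · calc τ ^ c ≤ s ^ c := Real.rpow_le_rpow hτ1.le hτ.2.le hA
          _ ≤ s ^ c * (1 + (1/2:ℝ) ^ c) := by nlinarith
      · calc τ ^ c ≤ (s/2) ^ c := Real.rpow_le_rpow_of_nonpos h2 hτ.1.le hA.le
          _ = s ^ c * (1/2:ℝ) ^ c := hhalf
          _ ≤ s ^ c * (1 + (1/2:ℝ) ^ c) := by nlinarith
    calc (s - τ) ^ a * τ ^ c ≤ (s - τ) ^ a * (s ^ c * (1 + (1/2:ℝ) ^ c)) :=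
          mul_le_mul_of_nonneg_left hb (Real.rpow_nonneg hsτ.le _)
      _ = (s ^ c * (1 + (1/2:ℝ) ^ c)) * (s - τ) ^ a := mul_comm _ _
  have int_c : ∫ τ in Ioc (0:ℝ) (s/2), τ ^ c = (s/2) ^ (c+1) / (c+1) := by
    rw [← intervalIntegral.integral_of_le h2.le, integral_rpow (Or.inl hc)]
    rw [Real.zero_rpow (by linarith : c + 1 ≠ 0)]
    ring
  have int_a : ∫ τ in Ioo (s/2) s, (s - τ) ^ a = (s/2) ^ (a+1) / (a+1) := by
    rw [← MeasureTheory.integral_Ioc_eq_integral_Ioo,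
      ← intervalIntegral.integral_of_le (by linarith : s/2 ≤ s)]
    rw [intervalIntegral.integral_comp_sub_left (fun u => u ^ a) s]
    rw [sub_self, show s - s/2 = s/2 by ring, integral_rpow (Or.inl ha)]
    rw [Real.zero_rpow (by linarith : a + 1 ≠ 0)]
    ring
  have p1 : ∫ τ in Ioc (0:ℝ) (s/2), (s - τ) ^ a * τ ^ c ≤
      (s ^ a * (1 + (1/2:ℝ) ^ a)) * ((s/2) ^ (c+1) / (c+1)) := by
    calc ∫ τ in Ioc (0:ℝ) (s/2), (s - τ) ^ a * τ ^ c
        ≤ ∫ τ in Ioc (0:ℝ) (s/2), (s ^ a * (1 + (1/2:ℝ) ^ a)) * τ ^ c := by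
          refine setIntegral_mono_on hi1 ?_ measurableSet_Ioc hMa
          exact ((intervalIntegral.intervalIntegrable_rpow' hc (a := 0)
            (b := s/2)).1).const_mul _
      _ = (s ^ a * (1 + (1/2:ℝ) ^ a)) * ((s/2) ^ (c+1) / (c+1)) := by
          rw [integral_const_mul, int_c]
  have p2 : ∫ τ in Ioo (s/2) s, (s - τ) ^ a * τ ^ c ≤
      (s ^ c * (1 + (1/2:ℝ) ^ c)) * ((s/2) ^ (a+1) / (a+1)) := by
    have hbase : IntegrableOn (fun τ : ℝ => (s - τ) ^ a) (Ioo (s/2) s) volume := by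
      have h1 : IntervalIntegrable (fun x : ℝ => x ^ a) volume 0 (s/2) :=
        intervalIntegral.intervalIntegrable_rpow' ha
      have h2' := h1.comp_sub_left s
      rw [sub_zero, show s - s/2 = s/2 by ring] at h2'
      exact (h2'.symm.1).mono_set Ioo_subset_Ioc_self
    calc ∫ τ in Ioo (s/2) s, (s - τ) ^ a * τ ^ c
        ≤ ∫ τ in Ioo (s/2) s, (s ^ c * (1 + (1/2:ℝ) ^ c)) * (s - τ) ^ a := by
          refine setIntegral_mono_on hi2 (hbase.const_mul _) measurableSet_Ioo hMc
      _ = (s ^ c * (1 + (1/2:ℝ) ^ c)) * ((s/2) ^ (a+1) / (a+1)) := by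
          rw [integral_const_mul, int_a]
  have hhalfc : (s/2:ℝ) ^ (c+1) = s ^ (c+1) * (1/2:ℝ) ^ (c+1) := by
    rw [show (s/2:ℝ) = s * (1/2) by ring, Real.mul_rpow hs.le (by norm_num)]
  have hhalfa : (s/2:ℝ) ^ (a+1) = s ^ (a+1) * (1/2:ℝ) ^ (a+1) := by
    rw [show (s/2:ℝ) = s * (1/2) by ring, Real.mul_rpow hs.le (by norm_num)]
  have hs_ac : s ^ (a + c + 1) = s ^ a * s ^ (c+1) := by
    rw [← Real.rpow_add hs]; ring_nf
  have hs_ca : s ^ (a + c + 1) = s ^ c * s ^ (a+1) := by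
    rw [← Real.rpow_add hs]; ring_nf
  calc (∫ τ in Ioc (0:ℝ) (s/2), (s - τ) ^ a * τ ^ c) +
        ∫ τ in Ioo (s/2) s, (s - τ) ^ a * τ ^ c
      ≤ (s ^ a * (1 + (1/2:ℝ) ^ a)) * ((s/2) ^ (c+1) / (c+1)) +
        (s ^ c * (1 + (1/2:ℝ) ^ c)) * ((s/2) ^ (a+1) / (a+1)) := add_le_add p1 p2
    _ = ((1 + (1/2:ℝ) ^ a) * ((1/2:ℝ) ^ (c+1) / (c+1)) +
        (1 + (1/2:ℝ) ^ c) * ((1/2:ℝ) ^ (a+1) / (a+1))) * s ^ (a + c + 1) := by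
        rw [hhalfc, hhalfa]
        calc s ^ a * (1 + (1/2:ℝ) ^ a) * (s ^ (c+1) * (1/2:ℝ) ^ (c+1) / (c+1)) +
              s ^ c * (1 + (1/2:ℝ) ^ c) * (s ^ (a+1) * (1/2:ℝ) ^ (a+1) / (a+1))
            = (1 + (1/2:ℝ) ^ a) * ((1/2:ℝ) ^ (c+1) / (c+1)) * (s ^ a * s ^ (c+1)) +
              (1 + (1/2:ℝ) ^ c) * ((1/2:ℝ) ^ (a+1) / (a+1)) * (s ^ c * s ^ (a+1)) := by
              ring
          _ = ((1 + (1/2:ℝ) ^ a) * ((1/2:ℝ) ^ (c+1) / (c+1)) +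
              (1 + (1/2:ℝ) ^ c) * ((1/2:ℝ) ^ (a+1) / (a+1))) * s ^ (a + c + 1) := by
              rw [← hs_ac, ← hs_ca]; ring


lemma integrableOn_trunc_Ioc {q : ℝ} {g : ℝ → ℝ} (hq : -1 < q) (hg : Continuous g) (T : ℝ) :
    IntegrableOn (trunc q g) (Ioc 0 T) volume := by
  rcases le_or_gt T 0 with hT | hT
  · rw [Ioc_eq_empty (by exact not_lt.2 hT)]; exact integrableOn_empty
  obtain ⟨M, hM0, hM⟩ := exists_bound hg T
  have hbase : IntegrableOn (fun x : ℝ => x ^ q) (Ioc 0 T) volume :=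
    (intervalIntegral.intervalIntegrable_rpow' hq (a := 0) (b := T)).1
  refine Integrable.mono' (hbase.const_mul M)
    ((measurable_trunc hg).aestronglyMeasurable.restrict) ?_
  rw [ae_restrict_iff' measurableSet_Ioc]
  filter_upwards with x hx
  rw [trunc_pos hx.1, Real.norm_eq_abs, abs_mul, abs_of_nonneg (Real.rpow_nonneg hx.1.le q)]
  rw [mul_comm M]
  exact mul_le_mul_of_nonneg_left (hM x ⟨hx.1.le, hx.2⟩) (Real.rpow_nonneg hx.1.le q)

lemma intervalIntegrable_of_vanish {g : ℝ → ℝ} (h0 : ∀ x ≤ (0:ℝ), g x = 0)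
    (hi : ∀ T : ℝ, 0 < T → IntegrableOn g (Ioc 0 T) volume)
    (hm : AEStronglyMeasurable g volume) (u v : ℝ) :
    IntervalIntegrable g volume u v := by
  have key : ∀ p r : ℝ, IntegrableOn g (Ioc p r) volume := by
    intro p r
    have hind : g = (Ioi (0:ℝ)).indicator g := by
      funext x
      by_cases hx : 0 < x
      · simp [Set.indicator_apply, Set.mem_Ioi, hx]
      · simp [Set.indicator_apply, Set.mem_Ioi, hx, h0 x (not_lt.1 hx)]
    rw [hind]
    rw [IntegrableOn, MeasureTheory.integrable_indicator_iff measurableSet_Ioi]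
    rw [IntegrableOn, Measure.restrict_restrict measurableSet_Ioi]
    refine (hi (max r 1) (by positivity)).mono_set ?_
    rintro x ⟨hx1, hx2⟩
    exact ⟨hx1, hx2.2.trans (le_max_left _ _)⟩
  exact ⟨key u v, key v u⟩

lemma intervalIntegrable_trunc {q : ℝ} {g : ℝ → ℝ} (hq : -1 < q) (hg : Continuous g) (u v : ℝ) :
    IntervalIntegrable (trunc q g) volume u v :=
  intervalIntegrable_of_vanish (fun _ h => trunc_nonpos h)
    (fun T _ => integrableOn_trunc_Ioc hq hg T)
    (measurable_trunc hg).aestronglyMeasurable u v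

lemma integrable_row {a c : ℝ} {A C : ℝ → ℝ} (ha : -1 < a) (hc : -1 < c)
    (hA : Continuous A) (hC : Continuous C) (s : ℝ) :
    Integrable (fun τ => trunc a A (s - τ) * trunc c C τ) volume := by
  rcases le_or_gt s 0 with hs | hs
  · have : (fun τ => trunc a A (s - τ) * trunc c C τ) = fun _ => (0:ℝ) := by
      funext τ
      rcases le_or_gt τ 0 with hτ | hτ
      · rw [trunc_nonpos hτ, mul_zero]
      · rw [trunc_nonpos (by linarith : s - τ ≤ 0), zero_mul]
    rw [this]; exact integrable_zero _ _ _
  · have hind : (fun τ => trunc a A (s - τ) * trunc c C τ) =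
        (Ioo (0:ℝ) s).indicator (fun τ => trunc a A (s - τ) * trunc c C τ) := by
      funext τ
      by_cases hτ : τ ∈ Ioo (0:ℝ) s
      · rw [Set.indicator_of_mem hτ]
      · rw [Set.indicator_of_notMem hτ]
        simp only [mem_Ioo, not_and_or, not_lt] at hτ
        rcases hτ with h | h
        · rw [trunc_nonpos h, mul_zero]
        · rw [trunc_nonpos (by linarith : s - τ ≤ 0), zero_mul]
    rw [hind, MeasureTheory.integrable_indicator_iff measurableSet_Ioo]
    obtain ⟨MA, hMA0, hMA⟩ := exists_bound hA s
    obtain ⟨MC, hMC0, hMC⟩ := exists_bound hC s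
    refine Integrable.mono' (((betaInt ha hc s).const_mul (MA * MC)))
      ((((measurable_trunc hA).comp (measurable_const.sub measurable_id)).mul
        (measurable_trunc hC)).aestronglyMeasurable.restrict) ?_
    rw [ae_restrict_iff' measurableSet_Ioo]
    filter_upwards with τ hτ
    have h1 : 0 < τ := hτ.1
    have h2 : 0 < s - τ := by linarith [hτ.2]
    rw [trunc_pos h2, trunc_pos h1, Real.norm_eq_abs]
    have e1 : |s - τ| = s - τ := abs_of_pos h2
    have e2 : |τ| = τ := abs_of_pos h1
    calc |(s - τ) ^ a * A (s - τ) * (τ ^ c * C τ)|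
        = (s - τ) ^ a * τ ^ c * (|A (s - τ)| * |C τ|) := by
          rw [abs_mul, abs_mul, abs_mul,
            abs_of_nonneg (Real.rpow_nonneg h2.le a),
            abs_of_nonneg (Real.rpow_nonneg h1.le c)]
          ring
      _ ≤ (s - τ) ^ a * τ ^ c * (MA * MC) := by
          refine mul_le_mul_of_nonneg_left ?_
            (mul_nonneg (Real.rpow_nonneg h2.le a) (Real.rpow_nonneg h1.le c))
          exact mul_le_mul (hMA _ ⟨h2.le, by linarith⟩) (hMC _ ⟨h1.le, by linarith [hτ.2]⟩)
            (abs_nonneg _) hMA0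
      _ = MA * MC * ((s - τ) ^ a * τ ^ c) := by ring

lemma row_norm_bound {a c : ℝ} {A C : ℝ → ℝ} (ha : -1 < a) (hc : -1 < c)
    (hA : Continuous A) (hC : Continuous C) {T : ℝ} (hT : 0 < T) :
    ∃ M : ℝ, 0 ≤ M ∧ ∀ s ∈ Ioc (0:ℝ) T,
      (∫ τ, ‖trunc a A (s - τ) * trunc c C τ‖) ≤ M * s ^ (a + c + 1) := by
  obtain ⟨MA, hMA0, hMA⟩ := exists_bound hA T
  obtain ⟨MC, hMC0, hMC⟩ := exists_bound hC T
  obtain ⟨K, hK0, hK⟩ := betaBound ha hc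
  refine ⟨MA * MC * K, by positivity, ?_⟩
  rintro s ⟨hs0, hsT⟩
  have hind : (fun τ => ‖trunc a A (s - τ) * trunc c C τ‖) =
      (Ioo (0:ℝ) s).indicator (fun τ => ‖trunc a A (s - τ) * trunc c C τ‖) := by
    funext τ
    by_cases hτ : τ ∈ Ioo (0:ℝ) s
    · rw [Set.indicator_of_mem hτ]
    · rw [Set.indicator_of_notMem hτ]
      simp only [mem_Ioo, not_and_or, not_lt] at hτ
      rcases hτ with h | h
      · rw [trunc_nonpos h, mul_zero, norm_zero]
      · rw [trunc_nonpos (by linarith : s - τ ≤ 0), zero_mul, norm_zero]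
  rw [hind, MeasureTheory.integral_indicator measurableSet_Ioo]
  have step1 : (∫ τ in Ioo (0:ℝ) s, ‖trunc a A (s - τ) * trunc c C τ‖) ≤
      ∫ τ in Ioo (0:ℝ) s, (MA * MC) * ((s - τ) ^ a * τ ^ c) := by
    refine setIntegral_mono_on ((integrable_row ha hc hA hC s).norm.integrableOn)
      ((betaInt ha hc s).const_mul _) measurableSet_Ioo ?_
    intro τ hτ
    have h1 : 0 < τ := hτ.1
    have h2 : 0 < s - τ := by linarith [hτ.2]
    rw [trunc_pos h2, trunc_pos h1, Real.norm_eq_abs]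
    calc |(s - τ) ^ a * A (s - τ) * (τ ^ c * C τ)|
        = (s - τ) ^ a * τ ^ c * (|A (s - τ)| * |C τ|) := by
          rw [abs_mul, abs_mul, abs_mul,
            abs_of_nonneg (Real.rpow_nonneg h2.le a),
            abs_of_nonneg (Real.rpow_nonneg h1.le c)]
          ring
      _ ≤ (s - τ) ^ a * τ ^ c * (MA * MC) := by
          refine mul_le_mul_of_nonneg_left ?_
            (mul_nonneg (Real.rpow_nonneg h2.le a) (Real.rpow_nonneg h1.le c))
          exact mul_le_mul (hMA _ ⟨h2.le, by linarith⟩) (hMC _ ⟨h1.le, by linarith [hτ.2]⟩)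
            (abs_nonneg _) hMA0
      _ = MA * MC * ((s - τ) ^ a * τ ^ c) := by ring
  calc (∫ τ in Ioo (0:ℝ) s, ‖trunc a A (s - τ) * trunc c C τ‖)
      ≤ ∫ τ in Ioo (0:ℝ) s, (MA * MC) * ((s - τ) ^ a * τ ^ c) := step1
    _ = (MA * MC) * ∫ τ in Ioo (0:ℝ) s, (s - τ) ^ a * τ ^ c := integral_const_mul _ _
    _ ≤ (MA * MC) * (K * s ^ (a + c + 1)) :=
        mul_le_mul_of_nonneg_left (hK s hs0) (by positivity)
    _ = MA * MC * K * s ^ (a + c + 1) := by ring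



lemma conv_vanish {F G : ℝ → ℝ} (hG : ∀ x ≤ (0:ℝ), G x = 0) {y : ℝ} (hy : y ≤ 0) :
    conv F G y = 0 := by
  unfold conv
  rw [intervalIntegral.integral_of_ge hy]
  rw [show (∫ τ in Ioc y 0, F (y - τ) * G τ) = 0 from ?_, neg_zero]
  rw [setIntegral_congr_fun measurableSet_Ioc
    (fun τ hτ => by show F (y - τ) * G τ = 0; rw [hG τ hτ.2, mul_zero] :
      EqOn (fun τ => F (y - τ) * G τ) 0 (Ioc y 0))]
  simp

lemma conv_eq_integral {F G : ℝ → ℝ} (hF : ∀ x ≤ (0:ℝ), F x = 0)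
    (hG : ∀ x ≤ (0:ℝ), G x = 0) (y : ℝ) :
    conv F G y = ∫ τ, F (y - τ) * G τ := by
  rcases le_or_gt y 0 with hy | hy
  · rw [conv_vanish hG hy]
    have : (fun τ => F (y - τ) * G τ) = fun _ => (0:ℝ) := by
      funext τ
      rcases le_or_gt τ 0 with hτ | hτ
      · rw [hG τ hτ, mul_zero]
      · rw [hF (y - τ) (by linarith), zero_mul]
    rw [this, integral_zero]
  · unfold conv
    rw [intervalIntegral.integral_of_le hy.le]
    have : (fun τ => F (y - τ) * G τ) =
        (Ioc (0:ℝ) y).indicator (fun τ => F (y - τ) * G τ) := by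
      funext τ
      by_cases hτ : τ ∈ Ioc (0:ℝ) y
      · rw [Set.indicator_of_mem hτ]
      · rw [Set.indicator_of_notMem hτ]
        simp only [mem_Ioc, not_and_or, not_lt, not_le] at hτ
        rcases hτ with h | h
        · rw [hG τ h, mul_zero]
        · rw [hF (y - τ) (by linarith), zero_mul]
    conv_rhs => rw [this]
    rw [MeasureTheory.integral_indicator measurableSet_Ioc]

lemma conv_comm_vanish {F G : ℝ → ℝ} (hF : ∀ x ≤ (0:ℝ), F x = 0)
    (hG : ∀ x ≤ (0:ℝ), G x = 0) (y : ℝ) :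
    conv F G y = conv G F y := by
  rw [conv_eq_integral hF hG, conv_eq_integral hG hF]
  have key : ∀ τ : ℝ, F (y - τ) * G τ = (fun u => F u * G (y - u)) (y - τ) := by
    intro τ; simp [sub_sub_cancel]
  calc (∫ τ, F (y - τ) * G τ) = ∫ τ, (fun u => F u * G (y - u)) (y - τ) := by
        congr 1; funext τ; exact key τ
    _ = ∫ u, F u * G (y - u) := integral_sub_left_eq_self (fun u => F u * G (y - u)) volume y
    _ = ∫ u, G (y - u) * F u := by congr 1; funext u; ring

lemma conv_congr {f f' g g' : ℝ → ℝ} (hf : ∀ x : ℝ, 0 < x → f x = f' x)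
    (hg : ∀ x : ℝ, 0 < x → g x = g' x) {t : ℝ} (ht : 0 ≤ t) :
    conv f g t = conv f' g' t := by
  unfold conv
  rw [intervalIntegral.integral_of_le ht, intervalIntegral.integral_of_le ht,
    MeasureTheory.integral_Ioc_eq_integral_Ioo, MeasureTheory.integral_Ioc_eq_integral_Ioo]
  apply setIntegral_congr_fun measurableSet_Ioo
  intro τ hτ
  show f (t - τ) * g τ = f' (t - τ) * g' τ
  rw [hf (t - τ) (by linarith [hτ.2]), hg τ hτ.1]

lemma assoc {a b c : ℝ} {A B C : ℝ → ℝ} (ha : -1 < a) (hb : -1 < b) (hc : -1 < c)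
    (hA : Continuous A) (hB : Continuous B) (hC : Continuous C) {t : ℝ} (ht : 0 < t) :
    conv (trunc b B) (conv (trunc a A) (trunc c C)) t =
      ∫ τ in Ioo (0:ℝ) t, conv (trunc b B) (trunc a A) (t - τ) * trunc c C τ := by
  set K := trunc b B with hKdef
  set P := trunc a A with hPdef
  set F := trunc c C with hFdef
  have hKv : ∀ x ≤ (0:ℝ), K x = 0 := fun x hx => trunc_nonpos hx
  have hPv : ∀ x ≤ (0:ℝ), P x = 0 := fun x hx => trunc_nonpos hx
  have hFv : ∀ x ≤ (0:ℝ), F x = 0 := fun x hx => trunc_nonpos hx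
  have hGv : ∀ x ≤ (0:ℝ), conv P F x = 0 := fun x hx => conv_vanish hFv hx
  have hmeas : AEStronglyMeasurable
      (Function.uncurry fun s τ => K (t - s) * (P (s - τ) * F τ))
      ((volume : Measure ℝ).prod volume) := by
    apply Measurable.aestronglyMeasurable
    exact ((measurable_trunc hB).comp (measurable_const.sub measurable_fst)).mul
      (((measurable_trunc hA).comp (measurable_fst.sub measurable_snd)).mul
        ((measurable_trunc hC).comp measurable_snd))
  have hInt : Integrable (Function.uncurry fun s τ => K (t - s) * (P (s - τ) * F τ))
      ((volume : Measure ℝ).prod volume) := by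
    rw [MeasureTheory.integrable_prod_iff hmeas]
    constructor
    · refine ae_of_all _ fun s => ?_
      simp only [Function.uncurry]
      exact (integrable_row ha hc hA hC s).const_mul _
    · obtain ⟨MB, hMB0, hMB⟩ := exists_bound hB t
      obtain ⟨M, hM0, hM⟩ := row_norm_bound ha hc hA hC ht
      refine Integrable.mono'
        (g := fun s => (Ioo (0:ℝ) t).indicator
          (fun s => (MB * (t - s) ^ b) * (M * s ^ (a + c + 1))) s)
        ?_ hmeas.norm.integral_prod_right' (ae_of_all _ ?_)
      · rw [MeasureTheory.integrable_indicator_iff measurableSet_Ioo]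
        have e : (fun s : ℝ => (MB * (t - s) ^ b) * (M * s ^ (a + c + 1))) =
            fun s : ℝ => (MB * M) * ((t - s) ^ b * s ^ (a + c + 1)) := by
          funext s; ring
        rw [IntegrableOn, e]
        exact ((betaInt hb (by linarith) t).const_mul _)
      · intro s
        simp only [Function.uncurry]
        have hnn : 0 ≤ ∫ τ, ‖K (t - s) * (P (s - τ) * F τ)‖ :=
          integral_nonneg fun τ => norm_nonneg _
        rw [Real.norm_eq_abs, abs_of_nonneg hnn]
        by_cases hs : s ∈ Ioo (0:ℝ) t
        · rw [Set.indicator_of_mem hs]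
          have e1 : (fun τ => ‖K (t - s) * (P (s - τ) * F τ)‖) =
              fun τ => ‖K (t - s)‖ * ‖P (s - τ) * F τ‖ := by
            funext τ; rw [norm_mul]
          rw [e1, integral_const_mul]
          have hts : 0 < t - s := by linarith [hs.2]
          have h1 : ‖K (t - s)‖ ≤ MB * (t - s) ^ b := by
            rw [hKdef, trunc_pos hts, Real.norm_eq_abs, abs_mul,
              abs_of_nonneg (Real.rpow_nonneg hts.le b), mul_comm MB]
            exact mul_le_mul_of_nonneg_left (hMB _ ⟨hts.le, by linarith [hs.1]⟩)
              (Real.rpow_nonneg hts.le b)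
          have h2 : (∫ τ, ‖P (s - τ) * F τ‖) ≤ M * s ^ (a + c + 1) :=
            hM s ⟨hs.1, hs.2.le⟩
          exact mul_le_mul h1 h2 (integral_nonneg fun τ => norm_nonneg _)
            (mul_nonneg hMB0 (Real.rpow_nonneg hts.le b))
        · rw [Set.indicator_of_notMem hs]
          have : (fun τ => ‖K (t - s) * (P (s - τ) * F τ)‖) = fun _ => (0:ℝ) := by
            funext τ
            simp only [mem_Ioo, not_and_or, not_lt] at hs
            rcases hs with h | h
            · rcases le_or_gt τ 0 with hτ | hτ
              · rw [hFv τ hτ, mul_zero, mul_zero, norm_zero]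
              · rw [hPv (s - τ) (by linarith), zero_mul, mul_zero, norm_zero]
            · rw [hKv (t - s) (by linarith), zero_mul, norm_zero]
          rw [this, integral_zero]
  have step2 : ∀ s, conv P F s = ∫ τ, P (s - τ) * F τ := conv_eq_integral hPv hFv
  have lhs1 : conv K (conv P F) t = ∫ s, K (t - s) * conv P F s :=
    conv_eq_integral hKv hGv t
  rw [lhs1]
  have lhs2 : (fun s => K (t - s) * conv P F s) =
      fun s => ∫ τ, K (t - s) * (P (s - τ) * F τ) := by
    funext s
    rw [step2 s, ← integral_const_mul]
  rw [lhs2]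
  rw [MeasureTheory.integral_integral_swap hInt]
  have inner : ∀ τ, (∫ s, K (t - s) * (P (s - τ) * F τ)) = conv K P (t - τ) * F τ := by
    intro τ
    have e1 : (fun s => K (t - s) * (P (s - τ) * F τ)) =
        fun s => (K (t - s) * P (s - τ)) * F τ := by
      funext s; ring
    rw [e1, integral_mul_const]
    congr 1
    have e2 := MeasureTheory.integral_add_right_eq_self (μ := volume)
      (fun s => K (t - s) * P (s - τ)) τ
    rw [← e2]
    have e3 : (fun u => K (t - (u + τ)) * P (u + τ - τ)) =
        fun u => K ((t - τ) - u) * P u := by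
      funext u
      rw [show t - (u + τ) = (t - τ) - u by ring, add_sub_cancel_right]
    rw [e3, ← conv_eq_integral hKv hPv (t - τ)]
  rw [show (fun τ => ∫ s, K (t - s) * (P (s - τ) * F τ)) =
      fun τ => conv K P (t - τ) * F τ from funext inner]
  have last : (fun τ => conv K P (t - τ) * F τ) =
      (Ioo (0:ℝ) t).indicator (fun τ => conv K P (t - τ) * F τ) := by
    funext τ
    by_cases hτ : τ ∈ Ioo (0:ℝ) t
    · rw [Set.indicator_of_mem hτ]
    · rw [Set.indicator_of_notMem hτ]
      simp only [mem_Ioo, not_and_or, not_lt] at hτ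
      rcases hτ with h | h
      · rw [hFv τ h, mul_zero]
      · rw [conv_vanish hPv (by linarith : t - τ ≤ 0), zero_mul]
  conv_lhs => rw [last]
  rw [MeasureTheory.integral_indicator measurableSet_Ioo]

def Hk (m : ℕ) : ℝ → ℝ := trunc ((m : ℝ) - 1) (fun _ => (Real.Gamma m)⁻¹)

lemma Hk_exp_gt {m : ℕ} (hm : 1 ≤ m) : (-1:ℝ) < (m : ℝ) - 1 := by
  have : (1:ℝ) ≤ (m : ℝ) := by exact_mod_cast hm
  linarith

def Gseq (c : ℝ) (C : ℝ → ℝ) : ℕ → ℝ → ℝ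
  | 0 => trunc c C
  | (m+1) => conv (Hk (m+1)) (trunc c C)

variable {c : ℝ} {C : ℝ → ℝ}

lemma Gseq_vanish (hc : -1 < c) (m : ℕ) : ∀ x ≤ (0:ℝ), Gseq c C m x = 0 := by
  intro x hx
  cases m with
  | zero => exact trunc_nonpos hx
  | succ j => exact conv_vanish (fun y hy => trunc_nonpos hy) hx

lemma conv_Hk_one {g : ℝ → ℝ} (hg : ∀ x ≤ (0:ℝ), g x = 0) (x : ℝ) :
    conv (Hk 1) g x = ∫ s in (0:ℝ)..x, g s := by
  have hH : ∀ y : ℝ, 0 < y → Hk 1 y = 1 := by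
    intro y hy
    rw [Hk, trunc_pos hy]
    norm_num [Real.Gamma_one]
  rcases le_or_gt x 0 with hx | hx
  · rw [conv_vanish hg hx, intervalIntegral.integral_of_ge hx]
    rw [setIntegral_congr_fun measurableSet_Ioc
      (fun s hs => by show g s = 0; exact hg s hs.2 : EqOn g 0 (Ioc x 0))]
    simp
  · unfold conv
    rw [intervalIntegral.integral_of_le hx.le, intervalIntegral.integral_of_le hx.le,
      MeasureTheory.integral_Ioc_eq_integral_Ioo, MeasureTheory.integral_Ioc_eq_integral_Ioo]
    apply setIntegral_congr_fun measurableSet_Ioo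
    intro s hs
    show Hk 1 (x - s) * g s = g s
    rw [hH _ (by linarith [hs.2]), one_mul]

lemma Hk_succ {m : ℕ} (hm : 1 ≤ m) (y : ℝ) :
    conv (Hk 1) (Hk m) y = Hk (m+1) y := by
  have hmR : (0:ℝ) < (m : ℝ) := by exact_mod_cast hm
  have hv : ∀ x ≤ (0:ℝ), Hk m x = 0 := fun x hx => trunc_nonpos hx
  rcases le_or_gt y 0 with hy | hy
  · rw [conv_vanish hv hy, Hk, trunc_nonpos hy]
  · rw [conv_Hk_one hv y]
    have e1 : (∫ s in (0:ℝ)..y, Hk m s) =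
        ∫ s in (0:ℝ)..y, s ^ ((m:ℝ) - 1) * (Real.Gamma m)⁻¹ := by
      rw [intervalIntegral.integral_of_le hy.le, intervalIntegral.integral_of_le hy.le,
        MeasureTheory.integral_Ioc_eq_integral_Ioo, MeasureTheory.integral_Ioc_eq_integral_Ioo]
      apply setIntegral_congr_fun measurableSet_Ioo
      intro s hs
      show Hk m s = s ^ ((m:ℝ) - 1) * (Real.Gamma m)⁻¹
      rw [Hk, trunc_pos hs.1]
    rw [e1, intervalIntegral.integral_mul_const, integral_rpow (Or.inl (by linarith)),
      sub_add_cancel]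
    rw [Real.zero_rpow hmR.ne']
    rw [Hk, trunc_pos hy]
    have ecast : ((m + 1 : ℕ) : ℝ) = (m : ℝ) + 1 := by push_cast; ring
    rw [ecast, add_sub_cancel_right, Real.Gamma_add_one hmR.ne']
    rw [mul_inv]
    ring

lemma Gseq_aesm (hc : -1 < c) (hC : Continuous C) (m : ℕ) :
    AEStronglyMeasurable (Gseq c C m) volume := by
  cases m with
  | zero => exact (measurable_trunc hC).aestronglyMeasurable
  | succ j =>
    have he : Gseq c C (j+1) = fun x => ∫ τ, Hk (j+1) (x - τ) * trunc c C τ := by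
      funext x
      exact conv_eq_integral (fun y hy => trunc_nonpos hy) (fun y hy => trunc_nonpos hy) x
    rw [he]
    apply MeasureTheory.AEStronglyMeasurable.integral_prod_right'
      (f := fun p : ℝ × ℝ => Hk (j+1) (p.1 - p.2) * trunc c C p.2)
    apply Measurable.aestronglyMeasurable
    exact ((measurable_trunc continuous_const).comp (measurable_fst.sub measurable_snd)).mul
      ((measurable_trunc hC).comp measurable_snd)

lemma Gseq_integrableOn (hc : -1 < c) (hC : Continuous C) {m : ℕ} (hm : 1 ≤ m)
    {T : ℝ} (hT : 0 < T) : IntegrableOn (Gseq c C m) (Ioc 0 T) volume := by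
  obtain ⟨j, rfl⟩ : ∃ j, m = j + 1 := ⟨m - 1, by omega⟩
  have ha : (-1:ℝ) < ((j+1:ℕ):ℝ) - 1 := Hk_exp_gt (by omega)
  obtain ⟨M, hM0, hM⟩ := row_norm_bound ha hc continuous_const hC hT
  have hdom : IntegrableOn (fun x : ℝ => M * x ^ (((j+1:ℕ):ℝ) - 1 + c + 1)) (Ioc 0 T) volume :=
    ((intervalIntegral.intervalIntegrable_rpow' (by linarith) (a := 0) (b := T)).1).const_mul M
  refine Integrable.mono' hdom ((Gseq_aesm hc hC (j+1)).restrict) ?_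
  rw [ae_restrict_iff' measurableSet_Ioc]
  filter_upwards with x hx
  have he : Gseq c C (j+1) x = ∫ τ, Hk (j+1) (x - τ) * trunc c C τ :=
    conv_eq_integral (fun y hy => trunc_nonpos hy) (fun y hy => trunc_nonpos hy) x
  rw [Real.norm_eq_abs, he]
  calc |∫ τ, Hk (j+1) (x - τ) * trunc c C τ|
      ≤ ∫ τ, ‖Hk (j+1) (x - τ) * trunc c C τ‖ := by
        rw [← Real.norm_eq_abs]; exact norm_integral_le_integral_norm _
    _ ≤ M * x ^ (((j+1:ℕ):ℝ) - 1 + c + 1) := hM x hx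

lemma Gseq_intervalIntegrable (hc : -1 < c) (hC : Continuous C) {m : ℕ} (hm : 1 ≤ m)
    (u v : ℝ) : IntervalIntegrable (Gseq c C m) volume u v :=
  intervalIntegrable_of_vanish (Gseq_vanish hc m)
    (fun T hT => Gseq_integrableOn hc hC hm hT)
    (Gseq_aesm hc hC m) u v

lemma Gseq_one (hc : -1 < c) (hC : Continuous C) :
    Gseq c C 1 = fun x => ∫ s in (0:ℝ)..x, trunc c C s := by
  funext x
  exact conv_Hk_one (fun y hy => trunc_nonpos hy) x

lemma Gseq_succ (hc : -1 < c) (hC : Continuous C) {m : ℕ} (hm : 1 ≤ m)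
    {x : ℝ} (hx : 0 < x) :
    Gseq c C (m+1) x = ∫ s in (0:ℝ)..x, Gseq c C m s := by
  obtain ⟨j, rfl⟩ : ∃ j, m = j + 1 := ⟨m - 1, by omega⟩
  have ha : (-1:ℝ) < ((j+1:ℕ):ℝ) - 1 := Hk_exp_gt (by omega)
  have hb : (-1:ℝ) < ((1:ℕ):ℝ) - 1 := by norm_num
  have step1 : (∫ s in (0:ℝ)..x, Gseq c C (j+1) s) =
      conv (Hk 1) (Gseq c C (j+1)) x :=
    (conv_Hk_one (Gseq_vanish hc (j+1)) x).symm
  have step2 : conv (Hk 1) (conv (Hk (j+1)) (trunc c C)) x =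
      ∫ τ in Ioo (0:ℝ) x, conv (Hk 1) (Hk (j+1)) (x - τ) * trunc c C τ :=
    assoc ha hb hc continuous_const continuous_const hC hx
  have step3 : (∫ τ in Ioo (0:ℝ) x, conv (Hk 1) (Hk (j+1)) (x - τ) * trunc c C τ) =
      ∫ τ in Ioo (0:ℝ) x, Hk (j+1+1) (x - τ) * trunc c C τ := by
    apply setIntegral_congr_fun measurableSet_Ioo
    intro τ hτ
    show conv (Hk 1) (Hk (j+1)) (x - τ) * trunc c C τ = Hk (j+1+1) (x - τ) * trunc c C τ
    rw [Hk_succ (by omega) (x - τ)]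
  have step4 : (∫ τ in Ioo (0:ℝ) x, Hk (j+1+1) (x - τ) * trunc c C τ) =
      Gseq c C (j+1+1) x := by
    show _ = conv (Hk (j+1+1)) (trunc c C) x
    unfold conv
    rw [intervalIntegral.integral_of_le hx.le, MeasureTheory.integral_Ioc_eq_integral_Ioo]
  rw [step1]
  show Gseq c C (j+1+1) x = conv (Hk 1) (conv (Hk (j+1)) (trunc c C)) x
  rw [step2, step3, step4]

lemma Gseq_contAt (hc : -1 < c) (hC : Continuous C) {m : ℕ} (hm : 1 ≤ m)
    {x : ℝ} (hx : 0 < x) : ContinuousAt (Gseq c C m) x := by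
  obtain ⟨j, rfl⟩ : ∃ j, m = j + 1 := ⟨m - 1, by omega⟩
  cases j with
  | zero =>
    rw [Gseq_one hc hC]
    exact (intervalIntegral.continuous_primitive
      (fun u v => intervalIntegrable_trunc hc hC u v) 0).continuousAt
  | succ i =>
    have hcont : Continuous (fun y => ∫ s in (0:ℝ)..y, Gseq c C (i+1) s) :=
      intervalIntegral.continuous_primitive
        (fun u v => Gseq_intervalIntegrable hc hC (by omega) u v) 0
    apply hcont.continuousAt.congr
    filter_upwards [isOpen_Ioi.mem_nhds hx] with y hy
    exact (Gseq_succ hc hC (by omega) hy).symm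

lemma Gseq_hasDerivAt (hc : -1 < c) (hC : Continuous C) (m : ℕ)
    {x : ℝ} (hx : 0 < x) :
    HasDerivAt (Gseq c C (m+1)) (Gseq c C m x) x := by
  cases m with
  | zero =>
    have hftc : HasDerivAt (fun u => ∫ s in (0:ℝ)..u, trunc c C s) (trunc c C x) x :=
      intervalIntegral.integral_hasDerivAt_right
        (intervalIntegrable_trunc hc hC 0 x)
        ((measurable_trunc hC).aestronglyMeasurable.stronglyMeasurableAtFilter)
        (continuousAt_trunc hC hx)
    rw [Gseq_one hc hC]
    exact hftc
  | succ j =>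
    have hftc : HasDerivAt (fun u => ∫ s in (0:ℝ)..u, Gseq c C (j+1) s)
        (Gseq c C (j+1) x) x :=
      intervalIntegral.integral_hasDerivAt_right
        (Gseq_intervalIntegrable hc hC (by omega) 0 x)
        ((Gseq_aesm hc hC (j+1)).stronglyMeasurableAtFilter)
        (Gseq_contAt hc hC (by omega) hx)
    apply hftc.congr_of_eventuallyEq
    filter_upwards [isOpen_Ioi.mem_nhds hx] with y hy
    exact Gseq_succ hc hC (by omega) hy

lemma Gseq_iter (hc : -1 < c) (hC : Continuous C) :
    ∀ (j m : ℕ) {x : ℝ}, 0 < x →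
      iteratedDeriv j (Gseq c C (m + j)) x = Gseq c C m x := by
  intro j
  induction j with
  | zero => intro m x hx; rw [iteratedDeriv_zero, Nat.add_zero]
  | succ i ih =>
    intro m x hx
    rw [iteratedDeriv_succ]
    have e : m + (i + 1) = (m + 1) + i := by omega
    rw [e]
    have heq : deriv (iteratedDeriv i (Gseq c C ((m+1) + i))) x =
        deriv (Gseq c C (m+1)) x := by
      apply Filter.EventuallyEq.deriv_eq
      filter_upwards [isOpen_Ioi.mem_nhds hx] with y hy
      exact ih (m+1) hy
    rw [heq, (Gseq_hasDerivAt hc hC m hx).deriv]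

lemma iteratedDeriv_congr_Ioi {f₁ f₂ : ℝ → ℝ} (h : ∀ y : ℝ, 0 < y → f₁ y = f₂ y) :
    ∀ (j : ℕ) {x : ℝ}, 0 < x → iteratedDeriv j f₁ x = iteratedDeriv j f₂ x := by
  intro j
  induction j with
  | zero => intro x hx; rw [iteratedDeriv_zero, iteratedDeriv_zero]; exact h x hx
  | succ i ih =>
    intro x hx
    rw [iteratedDeriv_succ, iteratedDeriv_succ]
    apply Filter.EventuallyEq.deriv_eq
    filter_upwards [isOpen_Ioi.mem_nhds hx] with y hy
    exact ih hy

lemma Cm1_extend {f : ℝ → ℝ} (hf : Cm1 f) :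
    ∃ q : ℝ, -1 < q ∧ ∃ g : ℝ → ℝ, Continuous g ∧ ∀ x : ℝ, 0 < x → f x = trunc q g x := by
  obtain ⟨q, hq, f₁, hf₁, hfe⟩ := hf
  refine ⟨q, hq, fun x => f₁ (max x 0), ?_, ?_⟩
  · exact hf₁.comp_continuous (continuous_id.max continuous_const) (fun x => le_max_right x 0)
  · intro x hx
    rw [trunc_pos hx, max_eq_left hx.le]
    exact hfe x hx

end GFDaux

open GFDaux

/-- the GFD is a left inverse of the GFI on `C_{-1}(0,∞)`. -/
theorem GFD_left_inverse_GFI (n : ℕ) (hn : 0 < n) (κ k : ℝ → ℝ)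
    (hκk : SonineL n κ k) (f : ℝ → ℝ) (hf : Cm1 f) :
    ∀ t : ℝ, 0 < t →
      GFD n k (GFI κ f) t = f t ∧ iteratedDeriv n (conv k (conv κ f)) t = f t := by
  intro t ht
  obtain ⟨a, ha, A, hA, hκe⟩ := Cm1_extend hκk.1
  have hkCm1 : Cm1 k := by
    obtain ⟨b, hb1, hb2, B₁, hB₁, hbe⟩ := hκk.2.1
    exact ⟨b, hb1, B₁, hB₁, hbe⟩
  obtain ⟨b, hb, B, hB, hke⟩ := Cm1_extend hkCm1
  obtain ⟨c, hc, Cf, hCf, hfe⟩ := Cm1_extend hf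
  have hSon := hκk.2.2
  have hmain : ∀ x : ℝ, 0 < x → conv k (conv κ f) x = Gseq c Cf n x := by
    intro x hx
    have h1 : conv k (conv κ f) x =
        conv (trunc b B) (conv (trunc a A) (trunc c Cf)) x := by
      apply conv_congr hke _ hx.le
      intro y hy
      exact conv_congr hκe hfe hy.le
    rw [h1, assoc ha hb hc hA hB hCf hx]
    have h2 : (∫ τ in Set.Ioo (0:ℝ) x, conv (trunc b B) (trunc a A) (x - τ) * trunc c Cf τ)
        = ∫ τ in Set.Ioo (0:ℝ) x, Hk n (x - τ) * trunc c Cf τ := by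
      apply MeasureTheory.setIntegral_congr_fun measurableSet_Ioo
      intro τ hτ
      show conv (trunc b B) (trunc a A) (x - τ) * trunc c Cf τ =
        Hk n (x - τ) * trunc c Cf τ
      have hxτ : 0 < x - τ := by linarith [hτ.2]
      have hcomm : conv (trunc b B) (trunc a A) (x - τ) =
          conv (trunc a A) (trunc b B) (x - τ) :=
        conv_comm_vanish (fun y hy => trunc_nonpos hy) (fun y hy => trunc_nonpos hy) _
      have hback : conv (trunc a A) (trunc b B) (x - τ) = conv κ k (x - τ) :=
        (conv_congr hκe hke hxτ.le).symm
      have hHk : hker (n:ℝ) (x - τ) = Hk n (x - τ) := by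
        show (x - τ) ^ ((n:ℝ) - 1) / Real.Gamma n = Hk n (x - τ)
        rw [Hk, trunc_pos hxτ, div_eq_mul_inv]
      rw [hcomm, hback, hSon (x - τ) hxτ, hHk]
    rw [h2]
    obtain ⟨m, rfl⟩ : ∃ m, n = m + 1 := ⟨n - 1, by omega⟩
    show _ = conv (Hk (m+1)) (trunc c Cf) x
    unfold conv
    rw [intervalIntegral.integral_of_le hx.le, MeasureTheory.integral_Ioc_eq_integral_Ioo]
  have key : iteratedDeriv n (conv k (conv κ f)) t = f t := by
    rw [iteratedDeriv_congr_Ioi hmain n ht]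
    have hit := Gseq_iter hc hCf n 0 ht
    rw [Nat.zero_add] at hit
    rw [hit]
    exact (hfe t ht).symm
  exact ⟨key, key⟩
end
end

section
/- Let n ∈ ℕ and (κ,k) ∈ L_n. If f belongs to C^1_{-1,(κ)}(0,∞), i.e. f = I_{(κ)} φ = κ*φ for some φ ∈ C_{-1}(0,∞), then the general fractional derivative is also a right inverse of the general fractional integral on f: (I_{(κ)} D_{(k)} f)(t) = f(t) for all t > 0. -/
noncomputable section

section AuxGFD
open MeasureTheory Set intervalIntegral

/-- Canonical measurable representative of a `C_{-1}` function. -/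
def ind (q : ℝ) (f₁ : ℝ → ℝ) : ℝ → ℝ :=
  fun x => Set.indicator (Set.Ioi 0) (fun y => y ^ q) x * f₁ (max x 0)

lemma ind_pos {q : ℝ} {f₁ : ℝ → ℝ} {x : ℝ} (hx : 0 < x) : ind q f₁ x = x ^ q * f₁ x := by
  simp [ind, Set.indicator_of_mem (Set.mem_Ioi.mpr hx), max_eq_left hx.le]

lemma ind_nonpos {q : ℝ} {f₁ : ℝ → ℝ} {x : ℝ} (hx : x ≤ 0) : ind q f₁ x = 0 := by
  simp [ind, Set.indicator_of_notMem (by simpa using hx : x ∉ Set.Ioi (0:ℝ))]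

lemma ind_measurable (q : ℝ) {f₁ : ℝ → ℝ} (hf₁ : ContinuousOn f₁ (Set.Ici 0)) :
    Measurable (ind q f₁) := by
  apply Measurable.mul
  · exact (Measurable.indicator (measurable_id.pow_const q) measurableSet_Ioi)
  · have : Continuous fun x : ℝ => f₁ (max x 0) :=
      hf₁.comp_continuous (continuous_id.max continuous_const) (fun x => Set.mem_Ici.mpr (le_max_right _ _))
    exact this.measurable

lemma ind_continuousAt {q : ℝ} {f₁ : ℝ → ℝ} (hf₁ : ContinuousOn f₁ (Set.Ici 0)) {x : ℝ}
    (hx : 0 < x) : ContinuousAt (ind q f₁) x := by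
  have h1 : ContinuousAt (fun y : ℝ => y ^ q * f₁ (max y 0)) x := by
    apply ContinuousAt.mul
    · exact Real.continuousAt_rpow_const x q (Or.inl hx.ne')
    · exact (hf₁.comp_continuous (continuous_id.max continuous_const)
        (fun y => Set.mem_Ici.mpr (le_max_right _ _))).continuousAt
  apply h1.congr
  filter_upwards [eventually_gt_nhds hx] with y hy
  simp [ind, Set.indicator_of_mem (Set.mem_Ioi.mpr hy)]

lemma ind_bound {q : ℝ} {f₁ : ℝ → ℝ} (hf₁ : ContinuousOn f₁ (Set.Ici 0)) (T : ℝ) (hT : 0 < T) :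
    ∃ C : ℝ, 0 ≤ C ∧ ∀ x ∈ Set.Ioc (0:ℝ) T, |ind q f₁ x| ≤ C * x ^ q := by
  obtain ⟨C, hC⟩ := (isCompact_Icc (a := (0:ℝ)) (b := T)).exists_bound_of_continuousOn
    (hf₁.mono (Set.Icc_subset_Ici_self))
  refine ⟨max C 0, le_max_right _ _, fun x hx => ?_⟩
  rw [ind_pos hx.1, abs_mul, abs_of_nonneg (Real.rpow_nonneg hx.1.le q), mul_comm]
  gcongr
  · exact Real.rpow_nonneg hx.1.le q
  · exact le_trans (hC x ⟨hx.1.le, hx.2⟩) (le_max_left _ _)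

lemma ind_intervalIntegrable {q : ℝ} {f₁ : ℝ → ℝ} (hq : -1 < q)
    (hf₁ : ContinuousOn f₁ (Set.Ici 0)) (a b : ℝ) :
    IntervalIntegrable (ind q f₁) volume a b := by
  rw [intervalIntegrable_iff]
  set T : ℝ := max (max a b) 1 with hT
  have hT1 : (0:ℝ) < T := lt_of_lt_of_le one_pos (le_max_right _ _)
  obtain ⟨C, hC0, hC⟩ := ind_bound hf₁ T hT1
  have hsub : Set.uIoc a b ⊆ Set.Iic 0 ∪ Set.Ioc 0 T := by
    intro x hx
    rcases le_or_gt x 0 with h | h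
    · exact Or.inl h
    · refine Or.inr ⟨h, ?_⟩
      rcases hx with ⟨h1, h2⟩
      calc x ≤ max a b := h2
        _ ≤ T := le_max_left _ _
  apply IntegrableOn.mono_set _ hsub
  apply IntegrableOn.union
  · apply (integrableOn_zero (μ := volume) (s := Set.Iic (0:ℝ))).congr_fun
    · intro x hx; exact (ind_nonpos hx).symm
    · exact measurableSet_Iic
  · have hrpow : IntegrableOn (fun x : ℝ => C * x ^ q) (Set.Ioc 0 T) volume := by
      have := (intervalIntegrable_rpow' (a := 0) (b := T) hq)
      rw [intervalIntegrable_iff, Set.uIoc_of_le hT1.le] at this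
      exact this.const_mul C
    apply hrpow.integrable.mono' ((ind_measurable q hf₁).aestronglyMeasurable.restrict)
    rw [ae_restrict_iff' measurableSet_Ioc]
    filter_upwards with x hx
    simpa [Real.norm_eq_abs] using hC x hx


lemma betaShape_contOn (α β L : ℝ) :
    ContinuousOn (fun x : ℝ => (L - x) ^ α * x ^ β) (Set.Ioo 0 L) := by
  intro x hx
  apply ContinuousWithinAt.mul
  · exact ((Real.continuousAt_rpow_const (L - x) α
      (Or.inl (by linarith [hx.2] : L - x ≠ 0))).comp
      ((continuous_const.sub continuous_id).continuousAt)).continuousWithinAt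
  · exact (Real.continuousAt_rpow_const x β (Or.inl hx.1.ne')).continuousWithinAt

lemma betaShape_integrableOn {α β : ℝ} (hα : -1 < α) (hβ : -1 < β) {L : ℝ} (hL : 0 < L) :
    IntegrableOn (fun x : ℝ => (L - x) ^ α * x ^ β) (Set.Ioo 0 L) volume := by
  have hmeas : ∀ s ⊆ Set.Ioo (0:ℝ) L, MeasurableSet s →
      AEStronglyMeasurable (fun x : ℝ => (L - x) ^ α * x ^ β) (volume.restrict s) :=
    fun s hs hms => ((betaShape_contOn α β L).mono hs).aestronglyMeasurable hms
  have hcover : Set.Ioo (0:ℝ) L ⊆ Set.Ioc 0 (L/2) ∪ Set.Ioo (L/2) L := by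
    intro x hx
    rcases le_or_gt x (L/2) with h | h
    · exact Or.inl ⟨hx.1, h⟩
    · exact Or.inr ⟨h, hx.2⟩
  apply IntegrableOn.mono_set _ hcover
  apply IntegrableOn.union
  · -- near 0 : (L-x)^α bounded, x^β integrable
    have hM : ∀ x ∈ Set.Ioc (0:ℝ) (L/2), (L - x) ^ α ≤ max ((L/2) ^ α) (L ^ α) := by
      intro x hx
      rcases le_or_gt α 0 with h | h
      · exact le_max_of_le_left
          (Real.rpow_le_rpow_of_nonpos (by linarith) (by linarith [hx.2]) h)
      · exact le_max_of_le_right (Real.rpow_le_rpow (by linarith [hx.2]) (by linarith [hx.1]) h.le)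
    set M := max ((L/2) ^ α) (L ^ α) with hMdef
    have hint : IntegrableOn (fun x : ℝ => M * x ^ β) (Set.Ioc 0 (L/2)) volume := by
      have := intervalIntegrable_rpow' (a := 0) (b := L/2) hβ
      rw [intervalIntegrable_iff, Set.uIoc_of_le (by linarith)] at this
      exact this.const_mul M
    apply hint.integrable.mono'
      (hmeas _ (fun x hx => ⟨hx.1, lt_of_le_of_lt hx.2 (by linarith)⟩) measurableSet_Ioc)
    rw [ae_restrict_iff' measurableSet_Ioc]
    filter_upwards with x hx
    rw [Real.norm_eq_abs, abs_mul,
      abs_of_nonneg (Real.rpow_nonneg (by linarith [hx.2] : (0:ℝ) ≤ L - x) _),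
      abs_of_nonneg (Real.rpow_nonneg hx.1.le _)]
    exact mul_le_mul_of_nonneg_right (hM x hx) (Real.rpow_nonneg hx.1.le _)
  · -- near L : x^β bounded, (L-x)^α integrable
    have hM : ∀ x ∈ Set.Ioo (L/2) L, x ^ β ≤ max ((L/2) ^ β) (L ^ β) := by
      intro x hx
      rcases le_or_gt β 0 with h | h
      · exact le_max_of_le_left
          (Real.rpow_le_rpow_of_nonpos (by linarith) hx.1.le h)
      · exact le_max_of_le_right (Real.rpow_le_rpow (by linarith [hx.1]) hx.2.le h.le)
    set M := max ((L/2) ^ β) (L ^ β) with hMdef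
    have hint : IntegrableOn (fun x : ℝ => (L - x) ^ α * M) (Set.Ioo (L/2) L) volume := by
      have h0 := intervalIntegrable_rpow' (a := 0) (b := L - L/2) hα
      have h1 := (h0.comp_sub_left L)
      rw [intervalIntegrable_iff] at h1
      have hss : Set.Ioo (L/2) L ⊆ Set.uIoc (L - 0) (L - (L - L/2)) := by
        rw [Set.uIoc_of_ge (by linarith)]
        intro x hx
        exact ⟨by linarith [hx.1], by linarith [hx.2]⟩
      exact ((h1.mono_set hss).mul_const M)
    apply hint.integrable.mono'
      (hmeas _ (fun x hx => ⟨lt_of_le_of_lt (by linarith) hx.1, hx.2⟩) measurableSet_Ioo)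
    rw [ae_restrict_iff' measurableSet_Ioo]
    filter_upwards with x hx
    rw [Real.norm_eq_abs, abs_mul,
      abs_of_nonneg (Real.rpow_nonneg (by linarith [hx.2] : (0:ℝ) ≤ L - x) _),
      abs_of_nonneg (Real.rpow_nonneg (by linarith [hx.1] : (0:ℝ) ≤ x) _)]
    exact mul_le_mul_of_nonneg_left (hM x hx) (Real.rpow_nonneg (by linarith [hx.2]) _)


/-- Beta-type constant. -/
def Bc (α β : ℝ) : ℝ := ∫ u in (0:ℝ)..1, (1 - u) ^ α * u ^ β

lemma Bc_nonneg (α β : ℝ) : 0 ≤ Bc α β := by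
  apply intervalIntegral.integral_nonneg zero_le_one
  intro u hu
  exact mul_nonneg (Real.rpow_nonneg (by linarith [hu.2]) _) (Real.rpow_nonneg hu.1 _)

lemma betaShape_setIntegral (α β : ℝ) {L : ℝ} (hL : 0 < L) :
    ∫ x in Set.Ioo (0:ℝ) L, (L - x) ^ α * x ^ β = L ^ (α + β + 1) * Bc α β := by
  have h1 : ∫ x in Set.Ioo (0:ℝ) L, (L - x) ^ α * x ^ β
      = ∫ x in (0:ℝ)..L, (L - x) ^ α * x ^ β := by
    rw [intervalIntegral.integral_of_le hL.le, MeasureTheory.integral_Ioc_eq_integral_Ioo]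
  rw [h1]
  have h2 := intervalIntegral.integral_comp_mul_left
    (a := (0:ℝ)) (b := 1) (fun x : ℝ => (L - x) ^ α * x ^ β) (ne_of_gt hL)
  rw [mul_zero, mul_one] at h2
  -- h2 : ∫ u in 0..1, (L - L*u)^α * (L*u)^β = L⁻¹ • ∫ x in 0..L, ...
  have h3 : ∫ u in (0:ℝ)..1, (L - L*u) ^ α * (L*u) ^ β
      = L ^ (α + β) * Bc α β := by
    rw [Bc, ← intervalIntegral.integral_const_mul]
    apply intervalIntegral.integral_congr_ae
    filter_upwards with u hu
    rw [Set.uIoc_of_le zero_le_one] at hu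
    have hu0 : 0 ≤ u := hu.1.le
    have hu1 : u ≤ 1 := hu.2
    have : L - L * u = L * (1 - u) := by ring
    rw [this, Real.mul_rpow hL.le (by linarith), Real.mul_rpow hL.le hu0,
      Real.rpow_add hL]
    ring
  rw [h3] at h2
  have h4 : ∫ x in (0:ℝ)..L, (L - x) ^ α * x ^ β = L * (L ^ (α + β) * Bc α β) := by
    rw [h2, smul_eq_mul]; field_simp
  rw [h4, show α + β + 1 = α + (β + 1) by ring, Real.rpow_add hL α (β+1),
    Real.rpow_add hL β 1, Real.rpow_one, Real.rpow_add hL α β]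
  ring

lemma conv_congr {a a' c c' : ℝ → ℝ} {t : ℝ} (ht : 0 < t)
    (ha : ∀ x ∈ Set.Ioo (0:ℝ) t, a x = a' x) (hc : ∀ x ∈ Set.Ioo (0:ℝ) t, c x = c' x) :
    conv a c t = conv a' c' t := by
  apply intervalIntegral.integral_congr_ae
  have hne : ∀ᵐ τ : ℝ, τ ≠ t := by
    refine (MeasureTheory.ae_iff).mpr ?_
    simpa using measure_singleton (α := ℝ) t
  filter_upwards [hne] with τ hτ hmem
  rw [Set.uIoc_of_le ht.le] at hmem
  have h1 : τ < t := lt_of_le_of_ne hmem.2 hτ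
  rw [ha _ ⟨by linarith [hmem.1], by linarith [hmem.1]⟩, hc _ ⟨hmem.1, h1⟩]

lemma conv_comm (f g : ℝ → ℝ) (t : ℝ) : conv f g t = conv g f t := by
  unfold conv
  have h := intervalIntegral.integral_comp_sub_left (a := (0:ℝ)) (b := t)
    (fun τ => g (t - τ) * f τ) t
  simp only [sub_self, sub_zero] at h
  calc ∫ τ in (0:ℝ)..t, f (t - τ) * g τ
      = ∫ τ in (0:ℝ)..t, g (t - (t - τ)) * f (t - τ) := by
        apply intervalIntegral.integral_congr
        intro x _
        simp only [sub_sub_cancel]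
        ring
    _ = ∫ τ in (0:ℝ)..t, g (t - τ) * f τ := h

lemma conv_assoc_ind {qa qb qc : ℝ} {a₁ b₁ c₁ : ℝ → ℝ}
    (hqa : -1 < qa) (hqb : -1 < qb) (hqc : -1 < qc)
    (ha₁ : ContinuousOn a₁ (Set.Ici 0)) (hb₁ : ContinuousOn b₁ (Set.Ici 0))
    (hc₁ : ContinuousOn c₁ (Set.Ici 0)) {t : ℝ} (ht : 0 < t) :
    conv (ind qa a₁) (conv (ind qb b₁) (ind qc c₁)) t
      = conv (conv (ind qa a₁) (ind qb b₁)) (ind qc c₁) t := by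
  set A := ind qa a₁ with hA
  set B := ind qb b₁ with hB
  set C := ind qc c₁ with hC
  obtain ⟨Ma, hMa0, hMa⟩ := ind_bound (q := qa) ha₁ t ht
  obtain ⟨Mb, hMb0, hMb⟩ := ind_bound (q := qb) hb₁ t ht
  obtain ⟨Mc, hMc0, hMc⟩ := ind_bound (q := qc) hc₁ t ht
  set T : Set (ℝ × ℝ) := {p | 0 < p.2 ∧ p.2 < p.1 ∧ p.1 < t} with hT
  have hTmeas : MeasurableSet T := by
    apply MeasurableSet.inter
    · exact measurableSet_lt measurable_const measurable_snd
    · exact MeasurableSet.inter (measurableSet_lt measurable_snd measurable_fst)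
        (measurableSet_lt measurable_fst measurable_const)
  set F : ℝ × ℝ → ℝ := T.indicator (fun p => A (t - p.1) * (B (p.1 - p.2) * C p.2)) with hF
  have hFmeas : Measurable F := by
    apply Measurable.indicator _ hTmeas
    exact ((ind_measurable qa ha₁).comp (measurable_const.sub measurable_fst)).mul
      (((ind_measurable qb hb₁).comp (measurable_fst.sub measurable_snd)).mul
        ((ind_measurable qc hc₁).comp measurable_snd))
  -- section descriptions
  have hFsec1 : ∀ s ∈ Set.Ioo (0:ℝ) t, ∀ τ : ℝ,
      F (s, τ) = (Set.Ioo (0:ℝ) s).indicator (fun τ => A (t - s) * (B (s - τ) * C τ)) τ := by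
    intro s hs τ
    by_cases hτ : τ ∈ Set.Ioo (0:ℝ) s
    · rw [Set.indicator_of_mem hτ, hF,
        Set.indicator_of_mem (by exact ⟨hτ.1, hτ.2, hs.2⟩ : (s, τ) ∈ T)]
    · rw [Set.indicator_of_notMem hτ, hF, Set.indicator_of_notMem]
      intro hmem
      exact hτ ⟨hmem.1, hmem.2.1⟩
  have hFsec0 : ∀ s : ℝ, s ∉ Set.Ioo (0:ℝ) t → ∀ τ : ℝ, F (s, τ) = 0 := by
    intro s hs τ
    rw [hF, Set.indicator_of_notMem]
    intro hmem
    exact hs ⟨lt_trans hmem.1 hmem.2.1, hmem.2.2⟩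
  -- bounds on sections
  have hsecbound : ∀ s ∈ Set.Ioo (0:ℝ) t, ∀ τ ∈ Set.Ioo (0:ℝ) s,
      |B (s - τ) * C τ| ≤ (Mb * Mc) * ((s - τ) ^ qb * τ ^ qc) := by
    intro s hs τ hτ
    rw [abs_mul]
    have h1 : |B (s - τ)| ≤ Mb * (s - τ) ^ qb :=
      hMb _ ⟨by linarith [hτ.2], by linarith [hτ.1, hs.2]⟩
    have h2 : |C τ| ≤ Mc * τ ^ qc := hMc _ ⟨hτ.1, by linarith [hτ.2, hs.2]⟩
    calc |B (s - τ)| * |C τ| ≤ (Mb * (s - τ) ^ qb) * (Mc * τ ^ qc) := by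
          apply mul_le_mul h1 h2 (abs_nonneg _)
          exact mul_nonneg hMb0 (Real.rpow_nonneg (by linarith [hτ.2]) _)
      _ = (Mb * Mc) * ((s - τ) ^ qb * τ ^ qc) := by ring
  -- integrability of inner sections
  have hsecint : ∀ s ∈ Set.Ioo (0:ℝ) t,
      IntegrableOn (fun τ => A (t - s) * (B (s - τ) * C τ)) (Set.Ioo 0 s) volume := by
    intro s hs
    apply Integrable.const_mul
    have hdom : IntegrableOn (fun τ : ℝ => (Mb * Mc) * ((s - τ) ^ qb * τ ^ qc))
        (Set.Ioo 0 s) volume := (betaShape_integrableOn hqb hqc hs.1).const_mul _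
    apply hdom.integrable.mono'
    · exact (((ind_measurable qb hb₁).comp (measurable_const.sub measurable_id)).mul
        ((ind_measurable qc hc₁).comp measurable_id)).aestronglyMeasurable.restrict
    · rw [ae_restrict_iff' measurableSet_Ioo]
      filter_upwards with τ hτ
      rw [Real.norm_eq_abs]
      exact hsecbound s hs τ hτ
  -- full integrability
  have hFint : Integrable F (volume.prod volume) := by
    rw [MeasureTheory.integrable_prod_iff hFmeas.aestronglyMeasurable]
    constructor
    · filter_upwards with s
      by_cases hs : s ∈ Set.Ioo (0:ℝ) t
      · have : (fun τ => F (s, τ))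
            = (Set.Ioo (0:ℝ) s).indicator (fun τ => A (t - s) * (B (s - τ) * C τ)) :=
          funext (hFsec1 s hs)
        rw [this, MeasureTheory.integrable_indicator_iff measurableSet_Ioo]
        exact hsecint s hs
      · have : (fun τ => F (s, τ)) = fun _ => (0:ℝ) := funext (hFsec0 s hs)
        rw [this]
        exact integrable_zero _ _ _
    · -- the norm integral is dominated
      set G : ℝ → ℝ := (Set.Ioo (0:ℝ) t).indicator
        (fun s => (Ma * ((Mb * Mc) * Bc qb qc)) * ((t - s) ^ qa * s ^ (qb + qc + 1))) with hG
      have hGint : Integrable G volume := by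
        rw [MeasureTheory.integrable_indicator_iff measurableSet_Ioo]
        exact (betaShape_integrableOn hqa (by linarith) ht).const_mul _
      apply hGint.mono' hFmeas.aestronglyMeasurable.norm.integral_prod_right'
      filter_upwards with s
      by_cases hs : s ∈ Set.Ioo (0:ℝ) t
      · have hnn : 0 ≤ ∫ τ, ‖F (s, τ)‖ := integral_nonneg fun τ => norm_nonneg _
        rw [Real.norm_eq_abs, abs_of_nonneg hnn]
        have hsec := hFsec1 s hs
        have h1 : (fun τ => ‖F (s, τ)‖)
            = (Set.Ioo (0:ℝ) s).indicator (fun τ => ‖A (t - s) * (B (s - τ) * C τ)‖) := by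
          funext τ
          rw [hsec τ, norm_indicator_eq_indicator_norm]
        rw [h1, MeasureTheory.integral_indicator measurableSet_Ioo]
        have h2 : ∫ τ in Set.Ioo (0:ℝ) s, ‖A (t - s) * (B (s - τ) * C τ)‖
            ≤ ∫ τ in Set.Ioo (0:ℝ) s,
                (Ma * (t - s) ^ qa) * ((Mb * Mc) * ((s - τ) ^ qb * τ ^ qc)) := by
          apply MeasureTheory.setIntegral_mono_on
          · exact ((hsecint s hs).norm)
          · exact (((betaShape_integrableOn hqb hqc hs.1).const_mul _).const_mul _)
          · exact measurableSet_Ioo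
          · intro τ hτ
            rw [Real.norm_eq_abs, abs_mul]
            apply mul_le_mul
            · exact hMa _ ⟨by linarith [hs.2], by linarith [hs.1]⟩
            · exact hsecbound s hs τ hτ
            · exact abs_nonneg _
            · exact mul_nonneg hMa0 (Real.rpow_nonneg (by linarith [hs.2]) _)
        have h3 : ∫ τ in Set.Ioo (0:ℝ) s,
              (Ma * (t - s) ^ qa) * ((Mb * Mc) * ((s - τ) ^ qb * τ ^ qc))
            = (Ma * (t - s) ^ qa) * ((Mb * Mc) * (s ^ (qb + qc + 1) * Bc qb qc)) := by
          rw [MeasureTheory.integral_const_mul]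
          congr 1
          rw [MeasureTheory.integral_const_mul, betaShape_setIntegral qb qc hs.1]
        rw [hG, Set.indicator_of_mem hs]
        calc ∫ τ in Set.Ioo (0:ℝ) s, ‖A (t - s) * (B (s - τ) * C τ)‖
            ≤ (Ma * (t - s) ^ qa) * ((Mb * Mc) * (s ^ (qb + qc + 1) * Bc qb qc)) :=
              h2.trans (le_of_eq h3)
          _ = (Ma * ((Mb * Mc) * Bc qb qc)) * ((t - s) ^ qa * s ^ (qb + qc + 1)) := by ring
      · have hz : (∫ τ, ‖F (s, τ)‖) = 0 := by
          simp only [hFsec0 s hs]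
          simp
        rw [Real.norm_eq_abs, hz, hG, Set.indicator_of_notMem hs]
        simp
  -- Fubini swap
  have hswap := MeasureTheory.integral_integral_swap
    (f := fun s τ => F (s, τ)) (μ := volume) (ν := volume) (by exact hFint)
  -- identify the left iterated integral
  have hinnerL : ∀ s : ℝ, (∫ τ, F (s, τ))
      = (Set.Ioo (0:ℝ) t).indicator (fun s => A (t - s) * conv (ind qb b₁) (ind qc c₁) s) s := by
    intro s
    by_cases hs : s ∈ Set.Ioo (0:ℝ) t
    · rw [Set.indicator_of_mem hs]
      have h1 : (∫ τ, F (s, τ))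
          = ∫ τ, (Set.Ioo (0:ℝ) s).indicator (fun τ => A (t - s) * (B (s - τ) * C τ)) τ := by
        congr 1
        exact funext (hFsec1 s hs)
      rw [h1, MeasureTheory.integral_indicator measurableSet_Ioo,
        MeasureTheory.integral_const_mul]
      congr 1
      rw [show conv (ind qb b₁) (ind qc c₁) s = ∫ τ in (0:ℝ)..s, B (s - τ) * C τ from rfl,
        intervalIntegral.integral_of_le hs.1.le, MeasureTheory.integral_Ioc_eq_integral_Ioo]
    · rw [Set.indicator_of_notMem hs]
      simp only [hFsec0 s hs]
      simp
  have hL : (∫ s, ∫ τ, F (s, τ)) = conv (ind qa a₁) (conv (ind qb b₁) (ind qc c₁)) t := by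
    rw [show (∫ s, ∫ τ, F (s, τ))
        = ∫ s, (Set.Ioo (0:ℝ) t).indicator
            (fun s => A (t - s) * conv (ind qb b₁) (ind qc c₁) s) s from by
      congr 1; exact funext hinnerL]
    rw [MeasureTheory.integral_indicator measurableSet_Ioo]
    rw [show conv (ind qa a₁) (conv (ind qb b₁) (ind qc c₁)) t
        = ∫ s in (0:ℝ)..t, A (t - s) * conv (ind qb b₁) (ind qc c₁) s from rfl,
      intervalIntegral.integral_of_le ht.le, MeasureTheory.integral_Ioc_eq_integral_Ioo]
  -- identify the right iterated integral
  have hinnerR : ∀ τ : ℝ, (∫ s, F (s, τ))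
      = (Set.Ioo (0:ℝ) t).indicator (fun τ => conv (ind qa a₁) (ind qb b₁) (t - τ) * C τ) τ := by
    intro τ
    by_cases hτ : τ ∈ Set.Ioo (0:ℝ) t
    · rw [Set.indicator_of_mem hτ]
      have hsec : ∀ s : ℝ, F (s, τ)
          = (Set.Ioo τ t).indicator (fun s => A (t - s) * B (s - τ) * C τ) s := by
        intro s
        by_cases hst : s ∈ Set.Ioo τ t
        · rw [Set.indicator_of_mem hst, hF,
            Set.indicator_of_mem (by exact ⟨hτ.1, hst.1, hst.2⟩ : (s, τ) ∈ T)]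
          ring
        · rw [Set.indicator_of_notMem hst, hF, Set.indicator_of_notMem]
          intro hmem
          exact hst ⟨hmem.2.1, hmem.2.2⟩
      have h1 : (∫ s, F (s, τ))
          = ∫ s in Set.Ioo τ t, A (t - s) * B (s - τ) * C τ := by
        rw [show (∫ s, F (s, τ)) = ∫ s, (Set.Ioo τ t).indicator
            (fun s => A (t - s) * B (s - τ) * C τ) s from by congr 1; exact funext hsec]
        exact MeasureTheory.integral_indicator measurableSet_Ioo
      rw [h1, MeasureTheory.integral_mul_const]
      congr 1
      have h2 : ∫ s in Set.Ioo τ t, A (t - s) * B (s - τ)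
          = ∫ s in τ..t, A (t - s) * B (s - τ) := by
        rw [intervalIntegral.integral_of_le hτ.2.le, MeasureTheory.integral_Ioc_eq_integral_Ioo]
      rw [h2]
      have h3 : ∀ s : ℝ, A (t - s) * B (s - τ) = (fun u => A (t - τ - u) * B u) (s - τ) := by
        intro s
        simp only []
        congr 2
        ring
      rw [intervalIntegral.integral_congr (g := fun s => (fun u => A (t - τ - u) * B u) (s - τ))
        (fun s _ => h3 s)]
      rw [intervalIntegral.integral_comp_sub_right (fun u => A (t - τ - u) * B u) τ]
      simp only [sub_self]
      rfl
    · rw [Set.indicator_of_notMem hτ]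
      have hz : ∀ s : ℝ, F (s, τ) = 0 := by
        intro s
        rw [hF, Set.indicator_of_notMem]
        intro hmem
        exact hτ ⟨hmem.1, lt_trans hmem.2.1 hmem.2.2⟩
      simp only [hz]
      simp
  have hR : (∫ τ, ∫ s, F (s, τ)) = conv (conv (ind qa a₁) (ind qb b₁)) (ind qc c₁) t := by
    rw [show (∫ τ, ∫ s, F (s, τ))
        = ∫ τ, (Set.Ioo (0:ℝ) t).indicator
            (fun τ => conv (ind qa a₁) (ind qb b₁) (t - τ) * C τ) τ from by
      congr 1; exact funext hinnerR]
    rw [MeasureTheory.integral_indicator measurableSet_Ioo]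
    rw [show conv (conv (ind qa a₁) (ind qb b₁)) (ind qc c₁) t
        = ∫ τ in (0:ℝ)..t, conv (ind qa a₁) (ind qb b₁) (t - τ) * C τ from rfl,
      intervalIntegral.integral_of_le ht.le, MeasureTheory.integral_Ioc_eq_integral_Ioo]
  rw [← hL, ← hR]
  exact hswap

lemma Cm1_hker {p : ℝ} (hp : 1 ≤ p) : Cm1 (hker p) :=
  ⟨p - 1, by linarith, fun _ => (Real.Gamma p)⁻¹, continuousOn_const,
    fun t _ => by rw [hker]; ring⟩

lemma Cm1_ind {q : ℝ} {f₁ : ℝ → ℝ} (hq : -1 < q) (hf₁ : ContinuousOn f₁ (Set.Ici 0)) :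
    Cm1 (ind q f₁) := ⟨q, hq, f₁, hf₁, fun _ ht => ind_pos ht⟩

lemma conv_assoc_Cm1 {a b c : ℝ → ℝ} (ha : Cm1 a) (hb : Cm1 b) (hc : Cm1 c) {t : ℝ}
    (ht : 0 < t) : conv a (conv b c) t = conv (conv a b) c t := by
  obtain ⟨qa, hqa, a₁, ha₁, haeq⟩ := ha
  obtain ⟨qb, hqb, b₁, hb₁, hbeq⟩ := hb
  obtain ⟨qc, hqc, c₁, hc₁, hceq⟩ := hc
  have hAa : ∀ x : ℝ, 0 < x → a x = ind qa a₁ x := fun x hx => by rw [ind_pos hx, haeq x hx]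
  have hBb : ∀ x : ℝ, 0 < x → b x = ind qb b₁ x := fun x hx => by rw [ind_pos hx, hbeq x hx]
  have hCc : ∀ x : ℝ, 0 < x → c x = ind qc c₁ x := fun x hx => by rw [ind_pos hx, hceq x hx]
  have h1 : conv a (conv b c) t = conv (ind qa a₁) (conv (ind qb b₁) (ind qc c₁)) t := by
    apply conv_congr ht (fun x hx => hAa x hx.1)
    intro x hx
    exact conv_congr hx.1 (fun y hy => hBb y hy.1) (fun y hy => hCc y hy.1)
  have h2 : conv (conv a b) c t = conv (conv (ind qa a₁) (ind qb b₁)) (ind qc c₁) t := by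
    apply conv_congr ht _ (fun x hx => hCc x hx.1)
    intro x hx
    exact conv_congr hx.1 (fun y hy => hAa y hy.1) (fun y hy => hBb y hy.1)
  rw [h1, h2, conv_assoc_ind hqa hqb hqc ha₁ hb₁ hc₁ ht]

/-- primitive from 0 -/
def intg (g : ℝ → ℝ) : ℝ → ℝ := fun x => ∫ τ in (0:ℝ)..x, g τ

lemma conv_one (g : ℝ → ℝ) (s : ℝ) : conv (hker 1) g s = intg g s := by
  simp [conv, intg, hker, Real.Gamma_one, Real.rpow_zero]

lemma intg_zero_of {g : ℝ → ℝ} (hg : ∀ y : ℝ, y ≤ 0 → g y = 0) {x : ℝ} (hx : x ≤ 0) :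
    intg g x = 0 := by
  rw [intg, intervalIntegral.integral_congr (g := fun _ => (0:ℝ)), intervalIntegral.integral_zero]
  intro y hy
  rw [Set.uIcc_of_ge hx] at hy
  exact hg y hy.2

lemma conv_zero_of {g h : ℝ → ℝ} (hh : ∀ y : ℝ, y ≤ 0 → h y = 0) {s : ℝ} (hs : s ≤ 0) :
    conv g h s = 0 := by
  rw [conv, intervalIntegral.integral_congr (g := fun _ => (0:ℝ)), intervalIntegral.integral_zero]
  intro y hy
  rw [Set.uIcc_of_ge hs] at hy
  show g (s - y) * h y = 0
  rw [hh y hy.2, mul_zero]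

lemma intg_hker {p : ℝ} (hp : 1 ≤ p) {s : ℝ} (hs : 0 < s) :
    intg (hker p) s = hker (p + 1) s := by
  have hΓ : Real.Gamma p ≠ 0 := (Real.Gamma_pos_of_pos (by linarith)).ne'
  rw [intg, hker]
  simp only [hker]
  rw [intervalIntegral.integral_div, integral_rpow (Or.inl (by linarith)),
    Real.zero_rpow (by linarith : p - 1 + 1 ≠ 0), Real.Gamma_add_one (by linarith : p ≠ 0)]
  have : p - 1 + 1 = p := by ring
  rw [this, show p + 1 - 1 = p by ring]
  field_simp
  simp

lemma iterk_zero_of {q : ℝ} {f₁ : ℝ → ℝ} (hq : -1 < q) (hf₁ : ContinuousOn f₁ (Set.Ici 0)) :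
    ∀ m : ℕ, ∀ x : ℝ, x ≤ 0 → (intg^[m] (ind q f₁)) x = 0 := by
  intro m
  induction m with
  | zero => exact fun x hx => ind_nonpos hx
  | succ m ih =>
    intro x hx
    rw [Function.iterate_succ_apply']
    exact intg_zero_of ih hx

lemma iterk_integrable {q : ℝ} {f₁ : ℝ → ℝ} (hq : -1 < q) (hf₁ : ContinuousOn f₁ (Set.Ici 0)) :
    ∀ m : ℕ, (∀ a b : ℝ, IntervalIntegrable (intg^[m] (ind q f₁)) volume a b) := by
  intro m
  induction m with
  | zero => exact ind_intervalIntegrable hq hf₁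
  | succ m ih =>
    intro a b
    have hcont : Continuous (intg^[m + 1] (ind q f₁)) := by
      have : intg^[m + 1] (ind q f₁) = fun x => ∫ τ in (0:ℝ)..x, (intg^[m] (ind q f₁)) τ := by
        funext x
        rw [Function.iterate_succ_apply']
        rfl
      rw [this]
      exact intervalIntegral.continuous_primitive ih 0
    exact hcont.intervalIntegrable a b

lemma iterk_continuous {q : ℝ} {f₁ : ℝ → ℝ} (hq : -1 < q) (hf₁ : ContinuousOn f₁ (Set.Ici 0))
    (m : ℕ) : Continuous (intg^[m + 1] (ind q f₁)) := by
  have : intg^[m + 1] (ind q f₁) = fun x => ∫ τ in (0:ℝ)..x, (intg^[m] (ind q f₁)) τ := by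
    funext x
    rw [Function.iterate_succ_apply']
    rfl
  rw [this]
  exact intervalIntegral.continuous_primitive (iterk_integrable hq hf₁ m) 0

lemma deriv_intg_of_cont {g : ℝ → ℝ} (hint : ∀ a b : ℝ, IntervalIntegrable g volume a b)
    (hcont : Continuous g) : deriv (intg g) = g := by
  funext x
  have h := intervalIntegral.integral_hasDerivAt_right (hint 0 x)
    ⟨Set.univ, Filter.univ_mem, hcont.aestronglyMeasurable.restrict⟩ hcont.continuousAt
  exact h.deriv

/-- the key FTC iteration -/
lemma iteratedDeriv_iterk {q : ℝ} {f₁ : ℝ → ℝ} (hq : -1 < q)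
    (hf₁ : ContinuousOn f₁ (Set.Ici 0)) :
    ∀ m : ℕ, 1 ≤ m → ∀ x : ℝ, 0 < x →
      iteratedDeriv m (intg^[m] (ind q f₁)) x = ind q f₁ x := by
  intro m
  induction m with
  | zero => omega
  | succ m ih =>
    intro _ x hx
    rcases Nat.eq_zero_or_pos m with hm | hm
    · subst hm
      rw [iteratedDeriv_one]
      have h := intervalIntegral.integral_hasDerivAt_right
        (ind_intervalIntegrable hq hf₁ 0 x)
        ⟨Set.univ, Filter.univ_mem, (ind_measurable q hf₁).aestronglyMeasurable.restrict⟩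
        (ind_continuousAt hf₁ hx)
      simp only [Function.iterate_one, zero_add]
      exact h.deriv
    · rw [iteratedDeriv_succ']
      have h1 : intg^[m + 1] (ind q f₁) = intg (intg^[m] (ind q f₁)) :=
        Function.iterate_succ_apply' intg m (ind q f₁)
      obtain ⟨m', rfl⟩ : ∃ m', m = m' + 1 := ⟨m - 1, by omega⟩
      have h2 : deriv (intg^[m' + 1 + 1] (ind q f₁)) = intg^[m' + 1] (ind q f₁) := by
        rw [h1]
        exact deriv_intg_of_cont (iterk_integrable hq hf₁ _) (iterk_continuous hq hf₁ m')
      rw [h2]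
      exact ih hm x hx

lemma iteratedDeriv_congr_of_open {U : Set ℝ} (hU : IsOpen U) {f g : ℝ → ℝ}
    (h : Set.EqOn f g U) (m : ℕ) : Set.EqOn (iteratedDeriv m f) (iteratedDeriv m g) U := by
  induction m with
  | zero => simpa [iteratedDeriv_zero] using h
  | succ m ih =>
    intro x hx
    rw [iteratedDeriv_succ, iteratedDeriv_succ]
    apply Filter.EventuallyEq.deriv_eq
    filter_upwards [hU.mem_nhds hx] with y hy using ih hy

/-- Cauchy's repeated-integration formula -/
lemma cauchy_iter {q : ℝ} {f₁ : ℝ → ℝ} (hq : -1 < q) (hf₁ : ContinuousOn f₁ (Set.Ici 0)) :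
    ∀ m : ℕ, 1 ≤ m → ∀ s : ℝ, conv (hker m) (ind q f₁) s = intg^[m] (ind q f₁) s := by
  intro m
  induction m with
  | zero => omega
  | succ m ih =>
    intro _ s
    rcases Nat.eq_zero_or_pos m with hm | hm
    · subst hm
      rw [show ((0:ℕ) + 1 : ℕ) = 1 from rfl, Nat.cast_one, conv_one, Function.iterate_one]
    · rcases le_or_gt s 0 with hs | hs
      · rw [conv_zero_of (fun y hy => ind_nonpos hy) hs,
          iterk_zero_of hq hf₁ (m + 1) s hs]
      · have hm1 : (1:ℝ) ≤ (m:ℝ) := by exact_mod_cast hm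
        have hstep1 : conv (hker (m + 1 : ℕ)) (ind q f₁) s
            = conv (conv (hker 1) (hker m)) (ind q f₁) s := by
          apply conv_congr hs _ (fun x _ => rfl)
          intro x hx
          rw [conv_one, intg_hker hm1 hx.1]
          push_cast
          ring_nf
        have hstep2 : conv (conv (hker 1) (hker m)) (ind q f₁) s
            = conv (hker 1) (conv (hker m) (ind q f₁)) s :=
          (conv_assoc_Cm1 (Cm1_hker le_rfl) (Cm1_hker hm1) (Cm1_ind hq hf₁) hs).symm
        have hstep3 : conv (hker 1) (conv (hker m) (ind q f₁)) s
            = intg (intg^[m] (ind q f₁)) s := by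
          rw [conv_one]
          unfold intg
          apply intervalIntegral.integral_congr
          intro y _
          exact ih hm y
        rw [hstep1, hstep2, hstep3, Function.iterate_succ_apply']


end AuxGFD

/-- the GFD is a right inverse of the GFI on
`C^1_{-1,(κ)}(0,∞) = I_{(κ)}(C_{-1}(0,∞))`. -/
theorem GFD_right_inverse_GFI (n : ℕ) (hn : 0 < n) (κ k : ℝ → ℝ)
    (hκk : SonineL n κ k) (f φ : ℝ → ℝ) (hφ : Cm1 φ)
    (hf : ∀ t : ℝ, 0 < t → f t = GFI κ φ t) :
    ∀ t : ℝ, 0 < t → GFI κ (GFD n k f) t = f t := by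
  intro t ht
  obtain ⟨hκC, hkC, hson⟩ := hκk
  obtain ⟨qφ, hqφ, φ₁, hφ₁, hφeq⟩ := hφ
  set Φ := ind qφ φ₁ with hΦ
  have hφΦ : ∀ x : ℝ, 0 < x → φ x = Φ x := fun x hx => by
    rw [hΦ, ind_pos hx, hφeq x hx]
  have hkCm1 : Cm1 k := by
    obtain ⟨q, h1, _h2, f₁, h3, h4⟩ := hkC
    exact ⟨q, h1, f₁, h3, h4⟩
  have hn1 : 1 ≤ n := hn
  -- Step 1 : `conv k f = intg^[n] Φ` on `(0,∞)`
  have hstep : ∀ s : ℝ, 0 < s → conv k f s = intg^[n] Φ s := by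
    intro s hs
    have e1 : conv k f s = conv k (conv κ Φ) s := by
      apply conv_congr hs (fun x _ => rfl)
      intro x hx
      rw [hf x hx.1]
      show conv κ φ x = conv κ Φ x
      exact conv_congr hx.1 (fun y _ => rfl) (fun y hy => hφΦ y hy.1)
    have e2 : conv k (conv κ Φ) s = conv (conv k κ) Φ s :=
      conv_assoc_Cm1 hkCm1 hκC (Cm1_ind hqφ hφ₁) hs
    have e3 : conv (conv k κ) Φ s = conv (hker n) Φ s := by
      apply conv_congr hs _ (fun x _ => rfl)
      intro x hx
      rw [conv_comm, hson x hx.1]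
    rw [e1, e2, e3]
    exact cauchy_iter hqφ hφ₁ n hn1 s
  -- Step 2 : `GFD n k f` agrees with `Φ` on `(0,∞)`
  have hGFD : ∀ s : ℝ, 0 < s → GFD n k f s = Φ s := by
    intro s hs
    have h1 : iteratedDeriv n (conv k f) s = iteratedDeriv n (intg^[n] Φ) s :=
      iteratedDeriv_congr_of_open isOpen_Ioi (fun x hx => hstep x hx) n hs
    show iteratedDeriv n (conv k f) s = Φ s
    rw [h1]
    exact iteratedDeriv_iterk hqφ hφ₁ n hn1 s hs
  -- Step 3
  rw [hf t ht]
  show conv κ (GFD n k f) t = conv κ φ t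
  apply conv_congr ht (fun x _ => rfl)
  intro x hx
  rw [hGFD x hx.1, hφΦ x hx.1]
end
end

section
/- (First Fundamental Theorem of FC for the m-fold sequential GFD of arbitrary order.) Let n, m ∈ ℕ and (κ,k) ∈ L_n. Then the m-fold sequential GFD in the Riemann–Liouville sense is a left inverse of the m-fold GFI on C_{-1}(0,∞): for every f ∈ C_{-1}(0,∞) and t > 0, (D^{<m>}_{(k)} I^{<m>}_{(κ)} f)(t) = f(t). -/
noncomputable section

/-- Convolution powers: `g^{<1>} = g`, `g^{<j+1>} = g * g^{<j>}` (and `g^{<0>} = 1`). -/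
def convPow (g : ℝ → ℝ) : ℕ → ℝ → ℝ
  | 0 => fun _ => 1
  | 1 => g
  | (j + 2) => conv g (convPow g (j + 1))

namespace FCFTC

open MeasureTheory Set Filter intervalIntegral

/-! ### Elementary inequalities and integrability of beta-type integrands -/

lemma rpow_le_max {l r x p : ℝ} (hl : 0 < l) (h1 : l ≤ x) (h2 : x ≤ r) :
    x ^ p ≤ max (l ^ p) (r ^ p) := by
  rcases le_or_gt 0 p with hp | hp
  · exact le_max_of_le_right (Real.rpow_le_rpow (by linarith) h2 hp)
  · exact le_max_of_le_left (Real.rpow_le_rpow_of_nonpos hl h1 hp.le)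

lemma rpow_cont_pos {p : ℝ} : ContinuousOn (fun x : ℝ => x ^ p) (Ioi 0) :=
  continuousOn_id.rpow_const fun _ hx => Or.inl (ne_of_gt hx)

lemma beta_integrable_aux {a b c : ℝ} (hb : -1 < b) (hc0 : 0 < c) (hc1 : c < 1) :
    IntegrableOn (fun u : ℝ => (1 - u) ^ a * u ^ b) (Ioo 0 c) := by
  have hint : IntegrableOn (fun u : ℝ => u ^ b) (Ioo (0:ℝ) c) := by
    rw [← intervalIntegrable_iff_integrableOn_Ioo_of_le hc0.le]
    exact intervalIntegrable_rpow' hb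
  have hmeas : AEStronglyMeasurable (fun u : ℝ => (1 - u) ^ a * u ^ b)
      (volume.restrict (Ioo 0 c)) := by
    apply ContinuousOn.aestronglyMeasurable _ measurableSet_Ioo
    apply ContinuousOn.mul
    · exact rpow_cont_pos.comp (continuous_const.sub continuous_id).continuousOn
        (fun x hx => by simp only [mem_Ioi]; linarith [hx.2])
    · exact rpow_cont_pos.mono fun x hx => hx.1
  refine Integrable.mono' ((hint.const_mul (max ((1-c) ^ a) (1 ^ a)))) hmeas ?_
  filter_upwards [ae_restrict_mem measurableSet_Ioo] with u hu
  have h1u : 0 < 1 - u := by linarith [hu.2]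
  have hub : (0:ℝ) < u := hu.1
  rw [Real.norm_eq_abs, abs_mul, abs_of_nonneg (Real.rpow_nonneg h1u.le _),
    abs_of_nonneg (Real.rpow_nonneg hub.le _)]
  have : (1 - u) ^ a ≤ max ((1-c) ^ a) (1 ^ a) :=
    rpow_le_max (by linarith) (by linarith [hu.2]) (by linarith [hu.1])
  exact mul_le_mul_of_nonneg_right this (Real.rpow_nonneg hub.le _)

lemma beta_integrableOn {a b : ℝ} (ha : -1 < a) (hb : -1 < b) :
    IntegrableOn (fun u : ℝ => (1 - u) ^ a * u ^ b) (Ioo 0 1) := by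
  have h1 : IntegrableOn (fun u : ℝ => (1 - u) ^ a * u ^ b) (Ioo 0 (3/4)) :=
    beta_integrable_aux hb (by norm_num) (by norm_num)
  have h2' : IntegrableOn (fun u : ℝ => (1 - u) ^ b * u ^ a) (Ioo 0 (1/2)) :=
    beta_integrable_aux ha (by norm_num) (by norm_num)
  have h2i : IntervalIntegrable (fun u : ℝ => (1 - u) ^ b * u ^ a) volume 0 (1/2) := by
    rw [intervalIntegrable_iff_integrableOn_Ioo_of_le (by norm_num)]; exact h2'
  have h3 := (h2i.comp_sub_left 1).symm
  have h4 : IntegrableOn (fun u : ℝ => (1 - u) ^ a * u ^ b) (Ioo (1/2) 1) := by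
    have := (intervalIntegrable_iff_integrableOn_Ioo_of_le (by norm_num : (1:ℝ)-1/2 ≤ 1-0)).mp h3
    norm_num at this ⊢
    exact this.congr_fun (fun x hx => by ring_nf) measurableSet_Ioo
  have : IntegrableOn (fun u : ℝ => (1 - u) ^ a * u ^ b) (Ioo 0 (3/4) ∪ Ioo (1/2) 1) :=
    h1.union h4
  exact this.mono_set fun x hx => by
    rcases lt_or_ge x (3/4) with h | h
    · exact Or.inl ⟨hx.1, h⟩
    · exact Or.inr ⟨by linarith, hx.2⟩

/-- The beta constant. -/
def Bc (a b : ℝ) : ℝ := ∫ u in (0:ℝ)..1, (1 - u) ^ a * u ^ b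

lemma Bc_nonneg (a b : ℝ) : 0 ≤ Bc a b := by
  apply intervalIntegral.integral_nonneg (by norm_num)
  intro u hu
  exact mul_nonneg (Real.rpow_nonneg (by linarith [hu.2]) _) (Real.rpow_nonneg hu.1 _)

lemma beta_integrableOn_Ioc {a b : ℝ} (ha : -1 < a) (hb : -1 < b) :
    IntegrableOn (fun u : ℝ => (1 - u) ^ a * u ^ b) (Ioc 0 1) :=
  (integrableOn_Ioc_iff_integrableOn_Ioo).mpr (beta_integrableOn ha hb)

lemma Bc_eq_set (a b : ℝ) : Bc a b = ∫ u in Ioc (0:ℝ) 1, (1 - u) ^ a * u ^ b :=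
  intervalIntegral.integral_of_le (by norm_num)

lemma conv_rpow_integrable {a b : ℝ} (ha : -1 < a) (hb : -1 < b) {t : ℝ} (ht : 0 < t) :
    IntervalIntegrable (fun s => (t - s) ^ a * s ^ b) volume 0 t := by
  have h0 : IntervalIntegrable (fun u : ℝ => (1 - u) ^ a * u ^ b) volume 0 1 := by
    rw [intervalIntegrable_iff_integrableOn_Ioo_of_le (by norm_num)]
    exact beta_integrableOn ha hb
  have h1 := (h0.comp_mul_left (c := t⁻¹)).const_mul (t ^ a * t ^ b)
  simp only [zero_div, one_div, inv_inv] at h1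
  rw [intervalIntegrable_iff_integrableOn_Ioo_of_le ht.le] at h1 ⊢
  apply h1.congr_fun _ measurableSet_Ioo
  intro s hs
  have hs0 := hs.1
  have hst := hs.2
  have h1s : 0 ≤ 1 - t⁻¹ * s := by
    rw [sub_nonneg, inv_mul_le_iff₀ ht, mul_one]; exact hst.le
  have e1 : t - s = t * (1 - t⁻¹ * s) := by field_simp
  have e2 : s = t * (t⁻¹ * s) := by field_simp
  calc t ^ a * t ^ b * ((1 - t⁻¹ * s) ^ a * (t⁻¹ * s) ^ b)
      = (t * (1 - t⁻¹ * s)) ^ a * (t * (t⁻¹ * s)) ^ b := by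
        rw [Real.mul_rpow ht.le h1s, Real.mul_rpow ht.le (by positivity)]; ring
    _ = (t - s) ^ a * s ^ b := by rw [← e1, ← e2]

lemma conv_rpow_eval {a b : ℝ} {t : ℝ} (ht : 0 < t) :
    ∫ s in (0:ℝ)..t, (t - s) ^ a * s ^ b = t ^ (a + b + 1) * Bc a b := by
  have key : (∫ u in (0:ℝ)..1, (t - t * u) ^ a * (t * u) ^ b)
      = t⁻¹ • ∫ s in (0:ℝ)..t, (t - s) ^ a * s ^ b := by
    have := intervalIntegral.integral_comp_mul_left (f := fun s => (t - s) ^ a * s ^ b)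
      (a := 0) (b := 1) (c := t) (ne_of_gt ht)
    simpa using this
  have e : (∫ u in (0:ℝ)..1, (t - t * u) ^ a * (t * u) ^ b)
      = t ^ a * t ^ b * Bc a b := by
    rw [Bc, ← intervalIntegral.integral_const_mul]
    apply intervalIntegral.integral_congr
    intro u hu
    rw [uIcc_of_le (by norm_num)] at hu
    have hu0 : (0:ℝ) ≤ u := hu.1
    have hu1 : u ≤ 1 := hu.2
    simp only
    have e1 : t - t * u = t * (1 - u) := by ring
    calc (t - t * u) ^ a * (t * u) ^ b
        = (t * (1 - u)) ^ a * (t * u) ^ b := by rw [e1]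
      _ = t ^ a * t ^ b * ((1 - u) ^ a * u ^ b) := by
          rw [Real.mul_rpow ht.le (by linarith), Real.mul_rpow ht.le hu0]; ring
  rw [e, smul_eq_mul] at key
  have ht' : (t : ℝ) ≠ 0 := ne_of_gt ht
  have h2 : (∫ s in (0:ℝ)..t, (t - s) ^ a * s ^ b) = t * (t ^ a * t ^ b * Bc a b) :=
    ((inv_mul_eq_iff_eq_mul₀ ht').mp key.symm)
  rw [h2, Real.rpow_add ht (a + b) 1, Real.rpow_add ht a b, Real.rpow_one]
  ring

/-! ### The class of nice functions -/

structure Nice (f : ℝ → ℝ) (q : ℝ) : Prop where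
  meas : Measurable f
  cont : ContinuousOn f (Set.Ioi 0)
  hq : -1 < q
  bound : ∀ T : ℝ, 0 < T → ∃ C : ℝ, 0 ≤ C ∧ ∀ s ∈ Set.Ioc (0:ℝ) T, |f s| ≤ C * s ^ q

lemma nice_of_cm1 {f : ℝ → ℝ} (hf : Cm1 f) :
    ∃ q : ℝ, ∃ f' : ℝ → ℝ, Nice f' q ∧ ∀ x : ℝ, 0 < x → f x = f' x := by
  obtain ⟨q, hq, f₁, hcont, heq⟩ := hf
  set F : ℝ → ℝ := fun x => f₁ (max x 0) with hF
  have hFc : Continuous F :=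
    hcont.comp_continuous (continuous_id.max continuous_const)
      (fun x => mem_Ici.mpr (le_max_right _ _))
  refine ⟨q, fun x => x ^ q * F x, ⟨?_, ?_, hq, ?_⟩, ?_⟩
  · exact (by measurability : Measurable fun x : ℝ => x ^ q).mul hFc.measurable
  · exact rpow_cont_pos.mul hFc.continuousOn
  · intro T hT
    obtain ⟨C, hC⟩ := (isCompact_Icc (a := (0:ℝ)) (b := T)).exists_bound_of_continuousOn
      hFc.continuousOn
    refine ⟨C, le_trans (norm_nonneg (F 0)) (hC 0 (by constructor <;> simp [hT.le])), ?_⟩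
    intro s hs
    rw [abs_mul, abs_of_nonneg (Real.rpow_nonneg hs.1.le _), mul_comm]
    exact mul_le_mul_of_nonneg_right
      (by simpa [Real.norm_eq_abs] using hC s ⟨hs.1.le, hs.2⟩) (Real.rpow_nonneg hs.1.le _)
  · intro x hx
    simp only [max_eq_left hx.le, F]
    exact heq x hx

lemma nice_hker {p : ℝ} (hp : 1 ≤ p) : Nice (hker p) (p - 1) := by
  have hΓ : 0 < Real.Gamma p := Real.Gamma_pos_of_pos (by linarith)
  refine ⟨?_, ?_, by linarith, ?_⟩
  · exact (by measurability : Measurable fun x : ℝ => x ^ (p-1)).div_const _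
  · exact rpow_cont_pos.div_const _
  · intro T _
    refine ⟨(Real.Gamma p)⁻¹, by positivity, fun s hs => ?_⟩
    rw [hker, abs_div, abs_of_nonneg (Real.rpow_nonneg hs.1.le _), abs_of_pos hΓ,
      div_eq_mul_inv, mul_comm]

lemma Nice.intervalIntegrable {f : ℝ → ℝ} {q : ℝ} (hf : Nice f q) {t : ℝ} (ht : 0 < t) :
    IntervalIntegrable f volume 0 t := by
  obtain ⟨C, _, hC⟩ := hf.bound t ht
  rw [intervalIntegrable_iff_integrableOn_Ioc_of_le ht.le]
  have hint : IntegrableOn (fun s : ℝ => C * s ^ q) (Ioc 0 t) := by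
    have h := intervalIntegrable_rpow' (a := 0) (b := t) hf.hq
    rw [intervalIntegrable_iff_integrableOn_Ioc_of_le ht.le] at h
    exact h.const_mul C
  refine Integrable.mono' hint hf.meas.aestronglyMeasurable ?_
  filter_upwards [ae_restrict_mem measurableSet_Ioc] with s hs
  simpa [Real.norm_eq_abs] using hC s hs

lemma ae_ne (μ : Measure ℝ) [NullSingletonClass μ] (c : ℝ) : ∀ᵐ x ∂μ, x ≠ c := by
  rw [ae_iff]
  have h : {x : ℝ | ¬ x ≠ c} = {c} := by ext x; simp
  rw [h]
  exact measure_singleton c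

lemma conv_congr {f f' g g' : ℝ → ℝ} (hf : ∀ x, 0 < x → f x = f' x)
    (hg : ∀ x, 0 < x → g x = g' x) {t : ℝ} (ht : 0 < t) : conv f g t = conv f' g' t := by
  apply intervalIntegral.integral_congr_ae
  filter_upwards [ae_ne volume t] with x hx hmem
  rw [uIoc_of_le ht.le] at hmem
  have hxt : x < t := lt_of_le_of_ne hmem.2 hx
  rw [hf (t - x) (by linarith), hg x hmem.1]

lemma conv_comm (f g : ℝ → ℝ) (t : ℝ) : conv f g t = conv g f t := by
  have := intervalIntegral.integral_comp_sub_left (a := 0) (b := t)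
    (fun x => f x * g (t - x)) t
  simp only [sub_zero, sub_self, sub_sub_cancel] at this
  unfold conv
  rw [this]
  apply intervalIntegral.integral_congr
  intro x _
  ring

/-! ### The measurable representative of a convolution -/

/-- uniform bound on `f (t * v)` for `v` in the unit interval -/
lemma Nice.bound_unit {f : ℝ → ℝ} {q : ℝ} (hf : Nice f q) {T : ℝ} (hT : 0 < T) :
    ∃ C : ℝ, 0 ≤ C ∧ ∀ t ∈ Ioc (0:ℝ) T, ∀ v ∈ Ioo (0:ℝ) 1,
      |f (t * v)| ≤ C * t ^ q * v ^ q := by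
  obtain ⟨C, hC0, hC⟩ := hf.bound T hT
  refine ⟨C, hC0, fun t ht v hv => ?_⟩
  have htv : t * v ∈ Ioc (0:ℝ) T :=
    ⟨mul_pos ht.1 hv.1, le_trans (mul_le_of_le_one_right ht.1.le hv.2.le) ht.2⟩
  calc |f (t * v)| ≤ C * (t * v) ^ q := hC _ htv
    _ = C * t ^ q * v ^ q := by rw [Real.mul_rpow ht.1.le hv.1.le]; ring

/-- the measurable representative of `conv f g` on `(0,∞)` -/
def Phi (f g : ℝ → ℝ) : ℝ → ℝ :=
  fun t => t * ∫ u in Ioc (0:ℝ) 1, f (t * (1 - u)) * g (t * u)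

lemma conv_eq_Phi (f g : ℝ → ℝ) {t : ℝ} (ht : 0 < t) : conv f g t = Phi f g t := by
  have key : (∫ u in (0:ℝ)..1, f (t - t * u) * g (t * u))
      = t⁻¹ • ∫ τ in (0:ℝ)..t, f (t - τ) * g τ := by
    have := intervalIntegral.integral_comp_mul_left (f := fun τ => f (t - τ) * g τ)
      (a := 0) (b := 1) (c := t) (ne_of_gt ht)
    simpa using this
  have e1 : conv f g t = t * ∫ u in (0:ℝ)..1, f (t - t * u) * g (t * u) := by
    rw [key, smul_eq_mul, ← mul_assoc, mul_inv_cancel₀ (ne_of_gt ht), one_mul]; rfl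
  rw [e1, Phi, ← intervalIntegral.integral_of_le (by norm_num : (0:ℝ) ≤ 1)]
  congr 1
  apply intervalIntegral.integral_congr
  intro u _
  show f (t - t * u) * g (t * u) = f (t * (1 - u)) * g (t * u)
  have e : t - t * u = t * (1 - u) := by ring
  rw [e]

lemma Phi_nice {f g : ℝ → ℝ} {qf qg : ℝ} (hf : Nice f qf) (hg : Nice g qg) :
    Nice (Phi f g) (qf + qg + 1) := by
  have hmF : ∀ t : ℝ, Measurable fun u : ℝ => f (t * (1 - u)) * g (t * u) := fun t =>
    (hf.meas.comp (measurable_const.mul (measurable_const.sub measurable_id))).mul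
      (hg.meas.comp (measurable_const.mul measurable_id))
  refine ⟨?_, ?_, by linarith [hf.hq, hg.hq], ?_⟩
  · have hm : StronglyMeasurable fun p : ℝ × ℝ => f (p.1 * (1 - p.2)) * g (p.1 * p.2) :=
      ((hf.meas.comp (measurable_fst.mul (measurable_const.sub measurable_snd))).mul
        (hg.meas.comp (measurable_fst.mul measurable_snd))).stronglyMeasurable
    exact measurable_id.mul
      (hm.integral_prod_right' (ν := volume.restrict (Ioc (0:ℝ) 1))).measurable
  · intro t₀ ht₀
    rw [mem_Ioi] at ht₀
    apply ContinuousAt.continuousWithinAt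
    apply ContinuousAt.mul continuousAt_id
    obtain ⟨Cf, hCf0, hCf⟩ := hf.bound_unit (T := 2 * t₀) (by linarith)
    obtain ⟨Cg, hCg0, hCg⟩ := hg.bound_unit (T := 2 * t₀) (by linarith)
    set Kf : ℝ := max ((t₀/2) ^ qf) ((2*t₀) ^ qf) with hKf
    set Kg : ℝ := max ((t₀/2) ^ qg) ((2*t₀) ^ qg) with hKg
    have hKf0 : 0 ≤ Kf := le_max_of_le_left (Real.rpow_nonneg (by linarith) _)
    have hKg0 : 0 ≤ Kg := le_max_of_le_left (Real.rpow_nonneg (by linarith) _)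
    apply continuousAt_of_dominated (bound := fun u => (Cf * Kf * (Cg * Kg)) *
        ((1 - u) ^ qf * u ^ qg))
    · exact Eventually.of_forall fun t => (hmF t).aestronglyMeasurable
    · filter_upwards [Ioo_mem_nhds (half_lt_self ht₀) (by linarith : t₀ < 2 * t₀)] with t htm
      filter_upwards [ae_restrict_mem measurableSet_Ioc, ae_ne _ 1] with u hu hu1
      have huo : u ∈ Ioo (0:ℝ) 1 := ⟨hu.1, lt_of_le_of_ne hu.2 hu1⟩
      have ht : t ∈ Ioc (0:ℝ) (2*t₀) := ⟨by linarith [htm.1], (htm.2).le⟩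
      have h1u : (1 - u) ∈ Ioo (0:ℝ) 1 := ⟨by linarith [huo.2], by linarith [huo.1]⟩
      have htKf : t ^ qf ≤ Kf := rpow_le_max (by linarith) htm.1.le htm.2.le
      have htKg : t ^ qg ≤ Kg := rpow_le_max (by linarith) htm.1.le htm.2.le
      have b1 : |f (t * (1 - u))| ≤ Cf * Kf * (1 - u) ^ qf := by
        calc |f (t * (1 - u))| ≤ Cf * t ^ qf * (1 - u) ^ qf := hCf t ht _ h1u
          _ ≤ Cf * Kf * (1 - u) ^ qf := by
              apply mul_le_mul_of_nonneg_right _ (Real.rpow_nonneg h1u.1.le _)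
              exact mul_le_mul_of_nonneg_left htKf hCf0
      have b2 : |g (t * u)| ≤ Cg * Kg * u ^ qg := by
        calc |g (t * u)| ≤ Cg * t ^ qg * u ^ qg := hCg t ht _ huo
          _ ≤ Cg * Kg * u ^ qg := by
              apply mul_le_mul_of_nonneg_right _ (Real.rpow_nonneg huo.1.le _)
              exact mul_le_mul_of_nonneg_left htKg hCg0
      calc ‖f (t * (1 - u)) * g (t * u)‖ = |f (t * (1 - u))| * |g (t * u)| := by
            rw [Real.norm_eq_abs, abs_mul]
        _ ≤ (Cf * Kf * (1 - u) ^ qf) * (Cg * Kg * u ^ qg) :=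
            mul_le_mul b1 b2 (abs_nonneg _)
              (mul_nonneg (mul_nonneg hCf0 hKf0) (Real.rpow_nonneg h1u.1.le _))
        _ = (Cf * Kf * (Cg * Kg)) * ((1 - u) ^ qf * u ^ qg) := by ring
    · exact ((beta_integrableOn_Ioc hf.hq hg.hq).const_mul _)
    · filter_upwards [ae_restrict_mem measurableSet_Ioc, ae_ne _ 1] with u hu hu1
      have huo : u ∈ Ioo (0:ℝ) 1 := ⟨hu.1, lt_of_le_of_ne hu.2 hu1⟩
      have c1 : ContinuousAt f (t₀ * (1 - u)) :=
        hf.cont.continuousAt (isOpen_Ioi.mem_nhds (mul_pos ht₀ (by linarith [huo.2])))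
      have c2 : ContinuousAt g (t₀ * u) :=
        hg.cont.continuousAt (isOpen_Ioi.mem_nhds (mul_pos ht₀ huo.1))
      have m1 : ContinuousAt (fun t : ℝ => t * (1 - u)) t₀ :=
        (continuous_id.mul continuous_const).continuousAt
      have m2 : ContinuousAt (fun t : ℝ => t * u) t₀ :=
        (continuous_id.mul continuous_const).continuousAt
      exact (ContinuousAt.comp (x := t₀) c1 m1).mul (ContinuousAt.comp (x := t₀) c2 m2)
  · intro T hT
    obtain ⟨Cf, hCf0, hCf⟩ := hf.bound_unit (T := T) hT
    obtain ⟨Cg, hCg0, hCg⟩ := hg.bound_unit (T := T) hT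
    refine ⟨Cf * Cg * Bc qf qg, mul_nonneg (mul_nonneg hCf0 hCg0) (Bc_nonneg qf qg), ?_⟩
    intro t ht
    have ht0 : 0 < t := ht.1
    have key : |∫ u in Ioc (0:ℝ) 1, f (t * (1 - u)) * g (t * u)|
        ≤ ∫ u in Ioc (0:ℝ) 1, (Cf * Cg * (t ^ qf * t ^ qg)) * ((1 - u) ^ qf * u ^ qg) := by
      rw [← Real.norm_eq_abs]
      apply MeasureTheory.norm_integral_le_of_norm_le ((beta_integrableOn_Ioc hf.hq hg.hq).const_mul _)
      filter_upwards [ae_restrict_mem measurableSet_Ioc, ae_ne _ 1] with u hu hu1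
      have huo : u ∈ Ioo (0:ℝ) 1 := ⟨hu.1, lt_of_le_of_ne hu.2 hu1⟩
      have h1u : (1 - u) ∈ Ioo (0:ℝ) 1 := ⟨by linarith [huo.2], by linarith [huo.1]⟩
      calc ‖f (t * (1 - u)) * g (t * u)‖ = |f (t * (1 - u))| * |g (t * u)| := by
            rw [Real.norm_eq_abs, abs_mul]
        _ ≤ (Cf * t ^ qf * (1 - u) ^ qf) * (Cg * t ^ qg * u ^ qg) :=
            mul_le_mul (hCf t ht _ h1u) (hCg t ht _ huo) (abs_nonneg _)
              (mul_nonneg (mul_nonneg hCf0 (Real.rpow_nonneg ht0.le _))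
                (Real.rpow_nonneg h1u.1.le _))
        _ = (Cf * Cg * (t ^ qf * t ^ qg)) * ((1 - u) ^ qf * u ^ qg) := by ring
    have e2 : ∫ u in Ioc (0:ℝ) 1, (Cf * Cg * (t ^ qf * t ^ qg)) * ((1 - u) ^ qf * u ^ qg)
        = (Cf * Cg * (t ^ qf * t ^ qg)) * Bc qf qg := by
      rw [MeasureTheory.integral_const_mul, Bc_eq_set]
    have habs : |Phi f g t| ≤ t * ((Cf * Cg * (t ^ qf * t ^ qg)) * Bc qf qg) := by
      rw [Phi, abs_mul, abs_of_pos ht0]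
      rw [e2] at key
      exact mul_le_mul_of_nonneg_left key ht0.le
    calc |Phi f g t| ≤ t * ((Cf * Cg * (t ^ qf * t ^ qg)) * Bc qf qg) := habs
      _ = Cf * Cg * Bc qf qg * (t ^ qf * t ^ qg * t) := by ring
      _ = Cf * Cg * Bc qf qg * t ^ (qf + qg + 1) := by
          rw [Real.rpow_add ht0, Real.rpow_add ht0, Real.rpow_one]

/-! ### Associativity of the Laplace convolution -/

lemma inner_conv {b c : ℝ → ℝ} {qb qc Cb Cc : ℝ} (hb : Nice b qb) (hc : Nice c qc)
    {t τ : ℝ} (ht : 0 < t) (hτ : τ ∈ Ioc 0 t)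
    (hCb0 : 0 ≤ Cb) (hCc0 : 0 ≤ Cc)
    (hCb : ∀ s ∈ Ioc (0:ℝ) t, |b s| ≤ Cb * s ^ qb)
    (hCc : ∀ s ∈ Ioc (0:ℝ) t, |c s| ≤ Cc * s ^ qc) :
    IntegrableOn (fun s => b (τ - s) * c s) (Ioo 0 τ) ∧
      ∫ s in Ioo (0:ℝ) τ, ‖b (τ - s) * c s‖ ≤ (Cb * Cc * Bc qb qc) * τ ^ (qb + qc + 1) := by
  have hτ0 : 0 < τ := hτ.1
  have hg : IntegrableOn (fun s : ℝ => (Cb * Cc) * ((τ - s) ^ qb * s ^ qc)) (Ioo 0 τ) := by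
    have h := conv_rpow_integrable hb.hq hc.hq hτ0
    rw [intervalIntegrable_iff_integrableOn_Ioo_of_le hτ0.le] at h
    exact h.const_mul _
  have hbd : ∀ s ∈ Ioo (0:ℝ) τ, ‖b (τ - s) * c s‖ ≤ (Cb * Cc) * ((τ - s) ^ qb * s ^ qc) := by
    intro s hs
    have h1 : τ - s ∈ Ioc (0:ℝ) t := ⟨by linarith [hs.2], by linarith [hs.1, hτ.2]⟩
    have h2 : s ∈ Ioc (0:ℝ) t := ⟨hs.1, by linarith [hs.2, hτ.2]⟩
    calc ‖b (τ - s) * c s‖ = |b (τ - s)| * |c s| := by rw [Real.norm_eq_abs, abs_mul]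
      _ ≤ (Cb * (τ - s) ^ qb) * (Cc * s ^ qc) :=
          mul_le_mul (hCb _ h1) (hCc _ h2) (abs_nonneg _)
            (mul_nonneg hCb0 (Real.rpow_nonneg (by linarith [hs.2]) _))
      _ = (Cb * Cc) * ((τ - s) ^ qb * s ^ qc) := by ring
  have hmeas : AEStronglyMeasurable (fun s => b (τ - s) * c s) (volume.restrict (Ioo 0 τ)) :=
    ((hb.meas.comp (measurable_const.sub measurable_id)).mul hc.meas).aestronglyMeasurable
  have hint : IntegrableOn (fun s => b (τ - s) * c s) (Ioo 0 τ) := by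
    refine hg.mono' hmeas ?_
    filter_upwards [ae_restrict_mem measurableSet_Ioo] with s hs using hbd s hs
  refine ⟨hint, ?_⟩
  have e : ∫ s in Ioo (0:ℝ) τ, (Cb * Cc) * ((τ - s) ^ qb * s ^ qc)
      = (Cb * Cc * Bc qb qc) * τ ^ (qb + qc + 1) := by
    rw [MeasureTheory.integral_const_mul, ← integral_Ioc_eq_integral_Ioo,
      ← intervalIntegral.integral_of_le hτ0.le, conv_rpow_eval hτ0]
    ring
  rw [← e]
  refine integral_mono_ae hint.norm hg ?_
  filter_upwards [ae_restrict_mem measurableSet_Ioo] with s hs using hbd s hs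

lemma conv_assoc {a b c : ℝ → ℝ} {qa qb qc : ℝ} (ha : Nice a qa) (hb : Nice b qb)
    (hc : Nice c qc) {t : ℝ} (ht : 0 < t) :
    conv a (conv b c) t = conv (conv a b) c t := by
  obtain ⟨Ca, hCa0, hCa⟩ := ha.bound t ht
  obtain ⟨Cb, hCb0, hCb⟩ := hb.bound t ht
  obtain ⟨Cc, hCc0, hCc⟩ := hc.bound t ht
  set μ := volume.restrict (Ioc (0:ℝ) t) with hμ
  set H : ℝ × ℝ → ℝ :=
    fun p => if p.2 < p.1 then a (t - p.1) * (b (p.1 - p.2) * c p.2) else 0 with hH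
  have hHmeas : Measurable H := by
    refine Measurable.ite (measurableSet_lt measurable_snd measurable_fst) ?_ measurable_const
    exact (ha.meas.comp (measurable_const.sub measurable_fst)).mul
      ((hb.meas.comp (measurable_fst.sub measurable_snd)).mul (hc.meas.comp measurable_snd))
  have hsec : ∀ τ s : ℝ, H (τ, s) =
      (Iio τ).indicator (fun s => a (t - τ) * (b (τ - s) * c s)) s := by
    intro τ s
    by_cases hs : s < τ <;> simp [hH, hs, indicator_apply, mem_Iio]
  have hsec2 : ∀ τ s : ℝ, H (τ, s) =
      (Ioi s).indicator (fun τ => a (t - τ) * (b (τ - s) * c s)) τ := by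
    intro τ s
    by_cases hs : s < τ <;> simp [hH, hs, indicator_apply, mem_Ioi]
  have hIoo : ∀ τ ∈ Ioc (0:ℝ) t, Iio τ ∩ Ioc 0 t = Ioo 0 τ := by
    intro τ hτ; ext x
    simp only [mem_inter_iff, mem_Iio, mem_Ioc, mem_Ioo]
    constructor
    · rintro ⟨h1, h2, _⟩; exact ⟨h2, h1⟩
    · rintro ⟨h1, h2⟩; exact ⟨h2, h1, le_trans h2.le hτ.2⟩
  have hIoi : ∀ s ∈ Ioo (0:ℝ) t, Ioi s ∩ Ioc 0 t = Ioc s t := by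
    intro s hs; ext x
    simp only [mem_inter_iff, mem_Ioi, mem_Ioc]
    constructor
    · rintro ⟨h1, _, h3⟩; exact ⟨h1, h3⟩
    · rintro ⟨h1, h2⟩; exact ⟨h1, lt_trans hs.1 h1, h2⟩
  have hint : Integrable H (μ.prod μ) := by
    rw [integrable_prod_iff hHmeas.aestronglyMeasurable]
    constructor
    · filter_upwards [ae_restrict_mem measurableSet_Ioc] with τ hτ
      have : (fun s => H (τ, s))
          = (Iio τ).indicator (fun s => a (t - τ) * (b (τ - s) * c s)) := funext (hsec τ)
      rw [this, hμ, integrable_indicator_iff measurableSet_Iio, IntegrableOn,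
        Measure.restrict_restrict measurableSet_Iio, hIoo τ hτ]
      exact ((inner_conv hb hc ht hτ hCb0 hCc0 hCb hCc).1.const_mul (a (t - τ)))
    · refine Integrable.mono'
        (g := fun τ => (Ca * (Cb * Cc * Bc qb qc)) * ((t - τ) ^ qa * τ ^ (qb + qc + 1))) ?_ ?_ ?_
      · have h := conv_rpow_integrable ha.hq
          (by linarith [hb.hq, hc.hq] : (-1:ℝ) < qb + qc + 1) ht
        rw [intervalIntegrable_iff_integrableOn_Ioc_of_le ht.le] at h
        exact h.const_mul _
      · exact hHmeas.aestronglyMeasurable.norm.integral_prod_right'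
      · filter_upwards [ae_restrict_mem measurableSet_Ioc, ae_ne μ t] with τ hτm hτt
        have hτ : τ ∈ Ioo (0:ℝ) t := ⟨hτm.1, lt_of_le_of_ne hτm.2 hτt⟩
        have e1 : ∫ s, ‖H (τ, s)‖ ∂μ
            = ∫ s in Ioo (0:ℝ) τ, ‖a (t - τ) * (b (τ - s) * c s)‖ := by
          have : (fun s => ‖H (τ, s)‖)
              = (Iio τ).indicator (fun s => ‖a (t - τ) * (b (τ - s) * c s)‖) := by
            funext s
            rw [hsec τ s, norm_indicator_eq_indicator_norm]
          rw [this, hμ, MeasureTheory.integral_indicator measurableSet_Iio,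
            Measure.restrict_restrict measurableSet_Iio, hIoo τ hτm]
        have e2 : ∫ s in Ioo (0:ℝ) τ, ‖a (t - τ) * (b (τ - s) * c s)‖
            = |a (t - τ)| * ∫ s in Ioo (0:ℝ) τ, ‖b (τ - s) * c s‖ := by
          simp only [norm_mul, Real.norm_eq_abs]
          rw [MeasureTheory.integral_const_mul]
        have hbound : |a (t - τ)| * (∫ s in Ioo (0:ℝ) τ, ‖b (τ - s) * c s‖)
            ≤ (Ca * (t - τ) ^ qa) * ((Cb * Cc * Bc qb qc) * τ ^ (qb + qc + 1)) := by
          apply mul_le_mul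
          · exact hCa _ ⟨by linarith [hτ.2], by linarith [hτ.1]⟩
          · exact (inner_conv hb hc ht ⟨hτ.1, hτ.2.le⟩ hCb0 hCc0 hCb hCc).2
          · exact integral_nonneg fun s => norm_nonneg _
          · exact mul_nonneg hCa0 (Real.rpow_nonneg (by linarith [hτ.2]) _)
        rw [Real.norm_eq_abs,
          abs_of_nonneg (by rw [e1]; exact integral_nonneg fun s => norm_nonneg _)]
        rw [e1, e2]
        calc |a (t - τ)| * ∫ s in Ioo (0:ℝ) τ, ‖b (τ - s) * c s‖
            ≤ (Ca * (t - τ) ^ qa) * ((Cb * Cc * Bc qb qc) * τ ^ (qb + qc + 1)) := hbound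
          _ = (Ca * (Cb * Cc * Bc qb qc)) * ((t - τ) ^ qa * τ ^ (qb + qc + 1)) := by ring
  have lhs : conv a (conv b c) t = ∫ τ, (∫ s, H (τ, s) ∂μ) ∂μ := by
    rw [conv, intervalIntegral.integral_of_le ht.le, ← hμ]
    refine integral_congr_ae ?_
    filter_upwards [ae_restrict_mem measurableSet_Ioc] with τ hτ
    have e1 : ∫ s, H (τ, s) ∂μ = ∫ s in Ioo (0:ℝ) τ, a (t - τ) * (b (τ - s) * c s) := by
      have : (fun s => H (τ, s))
          = (Iio τ).indicator (fun s => a (t - τ) * (b (τ - s) * c s)) := funext (hsec τ)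
      rw [this, hμ, MeasureTheory.integral_indicator measurableSet_Iio,
        Measure.restrict_restrict measurableSet_Iio, hIoo τ hτ]
    rw [e1, MeasureTheory.integral_const_mul]
    congr 1
    rw [conv, intervalIntegral.integral_of_le hτ.1.le, integral_Ioc_eq_integral_Ioo]
  have rhs : (∫ s, (∫ τ, H (τ, s) ∂μ) ∂μ) = conv (conv a b) c t := by
    rw [conv, intervalIntegral.integral_of_le ht.le, ← hμ]
    refine integral_congr_ae ?_
    filter_upwards [ae_restrict_mem measurableSet_Ioc, ae_ne μ t] with s hsm hst
    have hs : s ∈ Ioo (0:ℝ) t := ⟨hsm.1, lt_of_le_of_ne hsm.2 hst⟩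
    have e1 : ∫ τ, H (τ, s) ∂μ = ∫ τ in Ioc s t, a (t - τ) * (b (τ - s) * c s) := by
      have : (fun τ => H (τ, s))
          = (Ioi s).indicator (fun τ => a (t - τ) * (b (τ - s) * c s)) := funext fun τ => hsec2 τ s
      rw [this, hμ, MeasureTheory.integral_indicator measurableSet_Ioi,
        Measure.restrict_restrict measurableSet_Ioi, hIoi s hs]
    have e2 : ∫ τ in Ioc s t, a (t - τ) * (b (τ - s) * c s)
        = (∫ τ in s..t, a (t - τ) * b (τ - s)) * c s := by
      rw [← intervalIntegral.integral_of_le hs.2.le, ← intervalIntegral.integral_mul_const]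
      apply intervalIntegral.integral_congr
      intro τ _
      ring
    have e3 : (∫ τ in s..t, a (t - τ) * b (τ - s)) = conv a b (t - s) := by
      have sub := intervalIntegral.integral_comp_sub_right
        (f := fun x => a (t - s - x) * b x) (a := s) (b := t) s
      simp only [sub_self] at sub
      rw [conv, ← sub]
      apply intervalIntegral.integral_congr
      intro τ _
      show a (t - τ) * b (τ - s) = a (t - s - (τ - s)) * b (τ - s)
      have e : t - s - (τ - s) = t - τ := by ring
      rw [e]
    rw [e1, e2, e3]
  calc conv a (conv b c) t = ∫ τ, (∫ s, H (τ, s) ∂μ) ∂μ := lhs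
    _ = ∫ s, (∫ τ, H (τ, s) ∂μ) ∂μ := integral_integral_swap hint
    _ = conv (conv a b) c t := rhs

/-! ### The fundamental theorem for `hker`-convolutions -/

lemma iteratedDeriv_congr_pos {F G : ℝ → ℝ} (h : ∀ x, 0 < x → F x = G x) (n : ℕ) :
    ∀ t : ℝ, 0 < t → iteratedDeriv n F t = iteratedDeriv n G t := by
  induction n with
  | zero => intro t ht; simpa using h t ht
  | succ n ih =>
    intro t ht
    rw [iteratedDeriv_succ, iteratedDeriv_succ]
    apply Filter.EventuallyEq.deriv_eq
    filter_upwards [isOpen_Ioi.mem_nhds (mem_Ioi.mpr ht)] with x hx using ih x hx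

lemma hasDerivAt_primitive {g : ℝ → ℝ} {q : ℝ} (hg : Nice g q) {t : ℝ} (ht : 0 < t) :
    HasDerivAt (fun x => ∫ s in (0:ℝ)..x, g s) (g t) t :=
  intervalIntegral.integral_hasDerivAt_right (hg.intervalIntegrable ht)
    hg.meas.aestronglyMeasurable.stronglyMeasurableAtFilter
    (hg.cont.continuousAt (isOpen_Ioi.mem_nhds (mem_Ioi.mpr ht)))

lemma hker_one_eval (x : ℝ) : hker 1 x = 1 := by
  simp [hker, sub_self, Real.rpow_zero, Real.Gamma_one]

lemma conv_hker_one (g : ℝ → ℝ) : conv (hker 1) g = fun x => ∫ s in (0:ℝ)..x, g s := by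
  funext x
  apply intervalIntegral.integral_congr
  intro τ _
  show hker 1 (x - τ) * g τ = g τ
  rw [hker_one_eval, one_mul]

lemma hker_succ {j : ℕ} (hj : 1 ≤ j) {y : ℝ} (hy : 0 < y) :
    conv (hker 1) (hker (j : ℝ)) y = hker ((j : ℝ) + 1) y := by
  have hj1 : (1:ℝ) ≤ (j:ℝ) := by exact_mod_cast hj
  have hΓ : Real.Gamma ((j:ℝ) + 1) = (j:ℝ) * Real.Gamma (j:ℝ) :=
    Real.Gamma_add_one (by positivity)
  have e1 : conv (hker 1) (hker (j:ℝ)) y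
      = ∫ τ in (0:ℝ)..y, τ ^ ((j:ℝ) - 1) / Real.Gamma (j:ℝ) := by
    apply intervalIntegral.integral_congr
    intro τ _
    show hker 1 (y - τ) * hker (j:ℝ) τ = _
    rw [hker_one_eval, one_mul, hker]
  rw [e1, intervalIntegral.integral_div, integral_rpow (Or.inl (by linarith))]
  have e2 : ((j:ℝ) - 1) + 1 = (j:ℝ) := by ring
  rw [e2, Real.zero_rpow (by positivity), hker]
  have e3 : (j:ℝ) + 1 - 1 = (j:ℝ) := by ring
  rw [e3, hΓ]
  field_simp
  ring

lemma iteratedDeriv_hker_conv : ∀ j : ℕ, 1 ≤ j → ∀ (g : ℝ → ℝ) (q : ℝ), Nice g q →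
    ∀ t : ℝ, 0 < t → iteratedDeriv j (conv (hker (j : ℝ)) g) t = g t := by
  intro j hj
  induction j, hj using Nat.le_induction with
  | base =>
    intro g q hg t ht
    have h1 : conv (hker ((1:ℕ) : ℝ)) g = fun x => ∫ s in (0:ℝ)..x, g s := by
      rw [Nat.cast_one]; exact conv_hker_one g
    rw [iteratedDeriv_one, h1]
    exact (hasDerivAt_primitive hg ht).deriv
  | succ j hj ih =>
    intro g q hg t ht
    have hj1 : (1:ℝ) ≤ (j:ℝ) := by exact_mod_cast hj
    have hNj : Nice (hker (j:ℝ)) ((j:ℝ) - 1) := nice_hker hj1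
    set X := Phi (hker (j:ℝ)) g with hXdef
    have hX : Nice X ((j:ℝ) - 1 + q + 1) := Phi_nice hNj hg
    have hXeq : ∀ x, 0 < x → conv (hker (j:ℝ)) g x = X x := fun x hx => conv_eq_Phi _ _ hx
    have hN1 : Nice (hker 1) (1 - 1 : ℝ) := nice_hker le_rfl
    have claimA : ∀ x, 0 < x →
        conv (hker ((j+1 : ℕ) : ℝ)) g x = ∫ s in (0:ℝ)..x, X s := by
      intro x hx
      have c1 : conv (hker ((j+1 : ℕ) : ℝ)) g x = conv (conv (hker 1) (hker (j:ℝ))) g x := by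
        refine conv_congr (fun y hy => ?_) (fun _ _ => rfl) hx
        rw [hker_succ hj hy]
        push_cast
        ring_nf
      have c2 : conv (conv (hker 1) (hker (j:ℝ))) g x
          = conv (hker 1) (conv (hker (j:ℝ)) g) x := (conv_assoc hN1 hNj hg hx).symm
      have c3 : conv (hker 1) (conv (hker (j:ℝ)) g) x
          = ∫ τ in (0:ℝ)..x, conv (hker (j:ℝ)) g τ := by
        rw [conv_hker_one]
      have c4 : (∫ τ in (0:ℝ)..x, conv (hker (j:ℝ)) g τ) = ∫ s in (0:ℝ)..x, X s := by
        apply intervalIntegral.integral_congr_ae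
        apply Eventually.of_forall
        intro τ hτ
        rw [uIoc_of_le hx.le] at hτ
        exact hXeq τ hτ.1
      rw [c1, c2, c3, c4]
    have claimB : ∀ x, 0 < x → deriv (conv (hker ((j+1 : ℕ) : ℝ)) g) x = X x := by
      intro x hx
      have he : deriv (conv (hker ((j+1 : ℕ) : ℝ)) g) x
          = deriv (fun y => ∫ s in (0:ℝ)..y, X s) x := by
        apply Filter.EventuallyEq.deriv_eq
        filter_upwards [isOpen_Ioi.mem_nhds (mem_Ioi.mpr hx)] with y hy using claimA y hy
      rw [he]
      exact (hasDerivAt_primitive hX hx).deriv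
    rw [iteratedDeriv_succ']
    rw [iteratedDeriv_congr_pos claimB j t ht,
      iteratedDeriv_congr_pos (fun x hx => (hXeq x hx).symm) j t ht]
    exact ih g q hg t ht

/-! ### Assembly -/

lemma single_step {n : ℕ} (hn : 0 < n) {κ k : ℝ → ℝ} (hκk : SonineL n κ k)
    {g : ℝ → ℝ} {q : ℝ} (hg : Nice g q) :
    ∀ t : ℝ, 0 < t → iteratedDeriv n (conv k (conv κ g)) t = g t := by
  obtain ⟨qκ, κ', hκ', hκeq⟩ := nice_of_cm1 hκk.1
  have hkcm1 : Cm1 k := by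
    obtain ⟨q', h1, _, f₁, h3, h4⟩ := hκk.2.1
    exact ⟨q', h1, f₁, h3, h4⟩
  obtain ⟨qk, k', hk', hkeq⟩ := nice_of_cm1 hkcm1
  have hson := hκk.2.2
  set X := Phi κ' g with hX
  have hXn : Nice X (qκ + q + 1) := Phi_nice hκ' hg
  have hXeq : ∀ x, 0 < x → conv κ g x = X x := fun x hx => by
    rw [conv_congr hκeq (fun _ _ => rfl) hx]; exact conv_eq_Phi κ' g hx
  have key : ∀ y, 0 < y → conv k (conv κ g) y = conv (hker (n:ℝ)) g y := by
    intro y hy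
    have s1 : conv k (conv κ g) y = conv k' X y := conv_congr hkeq hXeq hy
    have s2 : conv k' X y = conv k' (conv κ' g) y :=
      conv_congr (fun _ _ => rfl) (fun x hx => (conv_eq_Phi κ' g hx).symm) hy
    have s3 : conv k' (conv κ' g) y = conv (conv k' κ') g y := conv_assoc hk' hκ' hg hy
    have s4 : conv (conv k' κ') g y = conv (hker (n:ℝ)) g y := by
      refine conv_congr (fun z hz => ?_) (fun _ _ => rfl) hy
      have h1 : conv k' κ' z = conv k κ z := (conv_congr hkeq hκeq hz).symm
      rw [h1, conv_comm k κ z, hson z hz]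
    rw [s1, s2, s3, s4]
  intro t ht
  rw [iteratedDeriv_congr_pos key n t ht]
  exact iteratedDeriv_hker_conv n hn g q hg t ht

lemma convPow_succ_of_pos (κ : ℝ → ℝ) {m : ℕ} (hm : 1 ≤ m) :
    convPow κ (m + 1) = conv κ (convPow κ m) := by
  obtain ⟨m', rfl⟩ : ∃ m', m = m' + 1 := ⟨m - 1, by omega⟩
  rfl

lemma convPow_rep {κ κ' : ℝ → ℝ} {qκ : ℝ} (hκ' : Nice κ' qκ)
    (hκeq : ∀ x, 0 < x → κ x = κ' x) :
    ∀ m : ℕ, 1 ≤ m → ∃ (P : ℝ → ℝ) (qP : ℝ), Nice P qP ∧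
      ∀ x, 0 < x → convPow κ m x = P x := by
  intro m hm
  induction m, hm using Nat.le_induction with
  | base => exact ⟨κ', qκ, hκ', fun x hx => hκeq x hx⟩
  | succ m hm ih =>
    obtain ⟨P, qP, hP, hPeq⟩ := ih
    refine ⟨Phi κ' P, qκ + qP + 1, Phi_nice hκ' hP, fun x hx => ?_⟩
    rw [convPow_succ_of_pos κ hm, conv_congr hκeq hPeq hx]
    exact conv_eq_Phi κ' P hx

lemma gfd_iter_congr (n : ℕ) (k : ℝ → ℝ) (m : ℕ) :
    ∀ {F G : ℝ → ℝ}, (∀ x, 0 < x → F x = G x) → ∀ t, 0 < t →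
      (GFD n k)^[m] F t = (GFD n k)^[m] G t := by
  induction m with
  | zero => intro F G h t ht; simpa using h t ht
  | succ m ih =>
    intro F G h t ht
    rw [Function.iterate_succ_apply, Function.iterate_succ_apply]
    refine ih (fun x hx => ?_) t ht
    show iteratedDeriv n (conv k F) x = iteratedDeriv n (conv k G) x
    exact iteratedDeriv_congr_pos (fun y hy => conv_congr (fun _ _ => rfl) h hy) n x hx

end FCFTC

/-- 1st Fundamental Theorem of FC for the m-fold sequential GFD:
the `m`-fold sequential GFD `D^{<m>}_{(k)} = D_{(k)}∘⋯∘D_{(k)}` is a left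
inverse of the `m`-fold GFI `I^{<m>}_{(κ)} f = κ^{<m>} * f` on `C_{-1}(0,∞)`. -/
theorem seq_GFD_left_inverse_mfold_GFI (n m : ℕ) (hn : 0 < n) (hm : 0 < m)
    (κ k : ℝ → ℝ) (hκk : SonineL n κ k) (f : ℝ → ℝ) (hf : Cm1 f) :
    ∀ t : ℝ, 0 < t → (GFD n k)^[m] (conv (convPow κ m) f) t = f t := by
  open FCFTC in
  obtain ⟨qκ, κ', hκ', hκeq⟩ := FCFTC.nice_of_cm1 hκk.1
  have main : ∀ m' : ℕ, 1 ≤ m' → ∀ (g : ℝ → ℝ) (q : ℝ), FCFTC.Nice g q → ∀ t, 0 < t →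
      (GFD n k)^[m'] (conv (convPow κ m') g) t = g t := by
    intro m' hm'
    induction m', hm' using Nat.le_induction with
    | base =>
      intro g q hg t ht
      rw [Function.iterate_one]
      show iteratedDeriv n (conv k (conv (convPow κ 1) g)) t = g t
      exact FCFTC.single_step hn hκk hg t ht
    | succ m' hm' ih =>
      intro g q hg t ht
      obtain ⟨P, qP, hP, hPeq⟩ := FCFTC.convPow_rep hκ' hκeq m' hm'
      set W := FCFTC.Phi P g with hWdef
      have hW : FCFTC.Nice W (qP + q + 1) := FCFTC.Phi_nice hP hg
      have hWeq : ∀ x, 0 < x → conv (convPow κ m') g x = W x := fun x hx => by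
        rw [FCFTC.conv_congr hPeq (fun _ _ => rfl) hx]; exact FCFTC.conv_eq_Phi P g hx
      have claim : ∀ y, 0 < y →
          GFD n k (conv (convPow κ (m' + 1)) g) y = conv (convPow κ m') g y := by
        intro y hy
        have inner : ∀ x, 0 < x → conv (convPow κ (m' + 1)) g x = conv κ W x := by
          intro x hx
          rw [FCFTC.convPow_succ_of_pos κ hm']
          have i1 : conv (conv κ (convPow κ m')) g x = conv (conv κ' P) g x :=
            FCFTC.conv_congr (fun z hz => FCFTC.conv_congr hκeq hPeq hz) (fun _ _ => rfl) hx
          have i2 : conv (conv κ' P) g x = conv κ' (conv P g) x :=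
            (FCFTC.conv_assoc hκ' hP hg hx).symm
          have i3 : conv κ' (conv P g) x = conv κ W x :=
            FCFTC.conv_congr (fun z hz => (hκeq z hz).symm)
              (fun z hz => FCFTC.conv_eq_Phi P g hz) hx
          rw [i1, i2, i3]
        show iteratedDeriv n (conv k (conv (convPow κ (m' + 1)) g)) y = conv (convPow κ m') g y
        rw [FCFTC.iteratedDeriv_congr_pos
          (fun x hx => FCFTC.conv_congr (fun _ _ => rfl) inner hx) n y hy]
        rw [FCFTC.single_step hn hκk hW y hy]
        exact (hWeq y hy).symm
      rw [Function.iterate_succ_apply]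
      rw [FCFTC.gfd_iter_congr n k m' claim t ht]
      exact ih g q hg t ht
  obtain ⟨qf, f', hf', hfeq⟩ := FCFTC.nice_of_cm1 hf
  intro t ht
  have e : ∀ x, 0 < x → conv (convPow κ m) f x = conv (convPow κ m) f' x :=
    fun x hx => FCFTC.conv_congr (fun _ _ => rfl) hfeq hx
  rw [FCFTC.gfd_iter_congr n k m e t ht, main m hm f' qf hf' t ht]
  exact (hfeq t ht).symm
end
end

section
/- Let n, m ∈ ℕ and (κ,k) ∈ L_n. If f ∈ C^m_{-1,(κ)}(0,∞), i.e. f = I^{<m>}_{(κ)} φ = κ^{<m>} * φ for some φ ∈ C_{-1}(0,∞), then the m-fold sequential GFD is a right inverse of the m-fold GFI on f: (I^{<m>}_{(κ)} D^{<m>}_{(k)} f)(t) = f(t) for all t > 0. -/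
noncomputable section

open MeasureTheory Set Filter intervalIntegral

namespace GFCaux

variable {f g p ψ : ℝ → ℝ} {t : ℝ}

lemma cm1_one : Cm1 (fun _ : ℝ => (1:ℝ)) :=
  ⟨0, by norm_num, fun _ => 1, continuousOn_const, fun t ht => by simp⟩

lemma Cm1.abs (hf : Cm1 f) : Cm1 (fun x => |f x|) := by
  obtain ⟨q, hq, f₁, hf₁, hfe⟩ := hf
  refine ⟨q, hq, fun x => |f₁ x|, hf₁.abs, fun x hx => ?_⟩
  show |f x| = x ^ q * |f₁ x|
  rw [hfe x hx, abs_mul, abs_of_nonneg (Real.rpow_nonneg hx.le q)]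

lemma Cm1.continuousAt (hf : Cm1 f) (ht : 0 < t) : ContinuousAt f t := by
  obtain ⟨q, hq, f₁, hf₁, hfe⟩ := hf
  have h1 : ContinuousAt (fun s : ℝ => s ^ q * f₁ s) t :=
    (Real.continuousAt_rpow_const t q (Or.inl ht.ne')).mul
      (hf₁.continuousAt (Ici_mem_nhds ht))
  exact h1.congr (eventuallyEq_of_mem (Ioi_mem_nhds ht) fun s hs => (hfe s hs).symm)

lemma rpow_base_bound {q a b x : ℝ} (ha : 0 < a) (h1 : a ≤ x) (h2 : x ≤ b) :
    x ^ q ≤ a ^ q + b ^ q := by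
  rcases le_or_gt 0 q with hq | hq
  · have : x ^ q ≤ b ^ q := Real.rpow_le_rpow (ha.le.trans h1) h2 hq
    have h0 : 0 ≤ a ^ q := Real.rpow_nonneg ha.le q
    linarith
  · have : x ^ q ≤ a ^ q := Real.rpow_le_rpow_of_nonpos ha h1 hq.le
    have h0 : 0 ≤ b ^ q := Real.rpow_nonneg ((ha.trans_le h1).le.trans h2) q
    linarith

lemma integrableOn_rpow_rpow {q1 q2 : ℝ} (h1 : -1 < q1) (h2 : -1 < q2) (ht : 0 < t) :
    IntegrableOn (fun τ => (t - τ) ^ q1 * τ ^ q2) (Ioo 0 t) := by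
  have h2t : 0 < t / 2 := by linarith
  have hcont : ∀ τ : ℝ, 0 < τ → τ < t → ContinuousAt (fun τ : ℝ => (t - τ) ^ q1 * τ ^ q2) τ := by
    intro τ h0 h1
    exact (((continuous_const.sub continuous_id).continuousAt).rpow_const
        (Or.inl (by simpa using sub_ne_zero.2 (ne_of_gt h1)))).mul
      ((continuousAt_id).rpow_const (Or.inl (ne_of_gt h0)))
  have piece1 : IntegrableOn (fun τ => (t - τ) ^ q1 * τ ^ q2) (Ioc 0 (t/2)) := by
    have hint : IntegrableOn (fun τ : ℝ => ((t/2) ^ q1 + t ^ q1) * τ ^ q2) (Ioc 0 (t/2)) :=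
      ((intervalIntegrable_iff_integrableOn_Ioc_of_le h2t.le).1
        (intervalIntegrable_rpow' h2)).const_mul _
    refine hint.mono' (ContinuousOn.aestronglyMeasurable
      (fun τ hτ => (hcont τ hτ.1 (by linarith [hτ.2])).continuousWithinAt)
      measurableSet_Ioc) ?_
    filter_upwards [ae_restrict_mem measurableSet_Ioc] with τ hτ
    have h0τ : 0 < τ := hτ.1
    have hsub : t / 2 ≤ t - τ := by linarith [hτ.2]
    have hsub' : t - τ ≤ t := by linarith
    have hb : (t - τ) ^ q1 ≤ (t/2) ^ q1 + t ^ q1 := rpow_base_bound h2t hsub hsub'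
    have hn1 : 0 ≤ (t - τ) ^ q1 := Real.rpow_nonneg (by linarith) q1
    have hn2 : (0:ℝ) ≤ τ ^ q2 := Real.rpow_nonneg h0τ.le q2
    rw [Real.norm_eq_abs, abs_of_nonneg (mul_nonneg hn1 hn2)]
    exact mul_le_mul_of_nonneg_right hb hn2
  have piece2 : IntegrableOn (fun τ => (t - τ) ^ q1 * τ ^ q2) (Ioo (t/2) t) := by
    have base : IntervalIntegrable (fun x : ℝ => x ^ q1) volume (t - t/2) (t - t) :=
      intervalIntegrable_rpow' h1
    have hint0 : IntervalIntegrable (fun τ : ℝ => (t - τ) ^ q1) volume (t/2) t := by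
      simpa using base.comp_sub_left t
    have hint1 : IntegrableOn (fun τ : ℝ => ((t/2) ^ q2 + t ^ q2) * (t - τ) ^ q1)
        (Ioc (t/2) t) :=
      ((intervalIntegrable_iff_integrableOn_Ioc_of_le (by linarith)).1 hint0).const_mul _
    have hint : IntegrableOn (fun τ : ℝ => ((t/2) ^ q2 + t ^ q2) * (t - τ) ^ q1)
        (Ioo (t/2) t) := hint1.mono_set Ioo_subset_Ioc_self
    refine hint.mono' (ContinuousOn.aestronglyMeasurable
      (fun τ hτ => (hcont τ (h2t.trans hτ.1) hτ.2).continuousWithinAt)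
      measurableSet_Ioo) ?_
    filter_upwards [ae_restrict_mem measurableSet_Ioo] with τ hτ
    have h0τ : 0 < τ := h2t.trans hτ.1
    have hb : τ ^ q2 ≤ (t/2) ^ q2 + t ^ q2 := rpow_base_bound h2t hτ.1.le hτ.2.le
    have hn1 : 0 ≤ (t - τ) ^ q1 := Real.rpow_nonneg (by linarith [hτ.2]) q1
    have hn2 : (0:ℝ) ≤ τ ^ q2 := Real.rpow_nonneg h0τ.le q2
    rw [Real.norm_eq_abs, abs_of_nonneg (mul_nonneg hn1 hn2)]
    calc (t - τ) ^ q1 * τ ^ q2 ≤ (t - τ) ^ q1 * ((t/2) ^ q2 + t ^ q2) :=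
          mul_le_mul_of_nonneg_left hb hn1
      _ = ((t/2) ^ q2 + t ^ q2) * (t - τ) ^ q1 := by ring
  refine (piece1.union piece2).mono_set ?_
  intro τ hτ
  rcases le_or_gt τ (t/2) with h | h
  · exact Or.inl ⟨hτ.1, h⟩
  · exact Or.inr ⟨h, hτ.2⟩



lemma conv_eq_Ioo (f g : ℝ → ℝ) (ht : 0 ≤ t) :
    conv f g t = ∫ τ in Ioo 0 t, f (t - τ) * g τ := by
  rw [conv, intervalIntegral.integral_of_le ht, integral_Ioc_eq_integral_Ioo]

lemma conv_comm (f g : ℝ → ℝ) (t : ℝ) : conv f g t = conv g f t := by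
  have h := intervalIntegral.integral_comp_sub_left (a := (0:ℝ)) (b := t)
    (fun u => g u * f (t - u)) t
  simp only [sub_sub_cancel, sub_zero, sub_self] at h
  show (∫ τ in (0:ℝ)..t, f (t - τ) * g τ) = ∫ τ in (0:ℝ)..t, g (t - τ) * f τ
  rw [show (fun τ => f (t - τ) * g τ) = fun τ => g τ * f (t - τ) by ext τ; ring] at *
  rw [← h]

lemma conv_congr_right (f : ℝ → ℝ) {g g' : ℝ → ℝ} (ht : 0 < t)
    (h : ∀ τ, 0 < τ → τ < t → g τ = g' τ) : conv f g t = conv f g' t := by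
  rw [conv_eq_Ioo f g ht.le, conv_eq_Ioo f g' ht.le]
  exact setIntegral_congr_fun measurableSet_Ioo fun τ hτ => by rw [h τ hτ.1 hτ.2]

lemma conv_congr_left {f f' : ℝ → ℝ} (g : ℝ → ℝ) (ht : 0 < t)
    (h : ∀ τ, 0 < τ → τ < t → f τ = f' τ) : conv f g t = conv f' g t := by
  rw [conv_eq_Ioo f g ht.le, conv_eq_Ioo f' g ht.le]
  refine setIntegral_congr_fun measurableSet_Ioo fun τ hτ => ?_
  rw [h (t - τ) (by simp [hτ.2]) (by simp [hτ.1])]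


lemma integrableOn_conv_integrand (hf : Cm1 f) (hg : Cm1 g) (ht : 0 < t) :
    IntegrableOn (fun τ => f (t - τ) * g τ) (Ioo 0 t) := by
  obtain ⟨q1, hq1, f₁, hf₁, hfe⟩ := hf
  obtain ⟨q2, hq2, g₁, hg₁, hge⟩ := hg
  obtain ⟨M1, hM1⟩ := (isCompact_Icc (a := (0:ℝ)) (b := t)).exists_bound_of_continuousOn
    (hf₁.mono Icc_subset_Ici_self)
  obtain ⟨M2, hM2⟩ := (isCompact_Icc (a := (0:ℝ)) (b := t)).exists_bound_of_continuousOn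
    (hg₁.mono Icc_subset_Ici_self)
  have hcont : ContinuousOn (fun τ => f (t - τ) * g τ) (Ioo 0 t) := by
    have hform : ContinuousOn
        (fun τ => ((t - τ) ^ q1 * f₁ (t - τ)) * (τ ^ q2 * g₁ τ)) (Ioo 0 t) := by
      intro τ hτ
      have hts : (0:ℝ) < t - τ := by simp [hτ.2]
      have c1 : ContinuousAt (fun τ : ℝ => (t - τ) ^ q1) τ :=
        ((continuous_const.sub continuous_id).continuousAt).rpow_const (Or.inl hts.ne')
      have c2 : ContinuousAt (fun τ : ℝ => f₁ (t - τ)) τ :=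
        (hf₁.continuousAt (Ici_mem_nhds hts)).comp
          ((continuous_const.sub continuous_id).continuousAt)
      have c3 : ContinuousAt (fun τ : ℝ => τ ^ q2) τ :=
        (continuousAt_id).rpow_const (Or.inl hτ.1.ne')
      have c4 : ContinuousAt g₁ τ := hg₁.continuousAt (Ici_mem_nhds hτ.1)
      exact ((c1.mul c2).mul (c3.mul c4)).continuousWithinAt
    refine hform.congr fun τ hτ => ?_
    rw [hfe (t - τ) (by simp [hτ.2]), hge τ hτ.1]
  have hnn1 : 0 ≤ M1 := le_trans (norm_nonneg (f₁ 0)) (hM1 0 (by constructor <;> simp [ht.le]))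
  have hnn2 : 0 ≤ M2 := le_trans (norm_nonneg (g₁ 0)) (hM2 0 (by constructor <;> simp [ht.le]))
  have hint : IntegrableOn (fun τ : ℝ => (M1 * M2) * ((t - τ) ^ q1 * τ ^ q2)) (Ioo 0 t) :=
    (integrableOn_rpow_rpow hq1 hq2 ht).const_mul _
  refine hint.mono' (hcont.aestronglyMeasurable measurableSet_Ioo) ?_
  filter_upwards [ae_restrict_mem measurableSet_Ioo] with τ hτ
  have hts : (0:ℝ) < t - τ := by simp [hτ.2]
  have e1 : 0 ≤ (t - τ) ^ q1 := Real.rpow_nonneg hts.le _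
  have e2 : (0:ℝ) ≤ τ ^ q2 := Real.rpow_nonneg hτ.1.le _
  rw [hfe (t - τ) hts, hge τ hτ.1]
  have b1 : |f₁ (t - τ)| ≤ M1 := hM1 _ ⟨hts.le, by linarith [hτ.1]⟩
  have b2 : |g₁ τ| ≤ M2 := hM2 _ ⟨hτ.1.le, by linarith [hτ.2]⟩
  calc ‖(t - τ) ^ q1 * f₁ (t - τ) * (τ ^ q2 * g₁ τ)‖
      = ((t - τ) ^ q1 * τ ^ q2) * (|f₁ (t - τ)| * |g₁ τ|) := by
        rw [Real.norm_eq_abs, abs_mul, abs_mul, abs_mul,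
          abs_of_nonneg e1, abs_of_nonneg e2]; ring
    _ ≤ ((t - τ) ^ q1 * τ ^ q2) * (M1 * M2) := by
        apply mul_le_mul_of_nonneg_left _ (mul_nonneg e1 e2)
        exact mul_le_mul b1 b2 (abs_nonneg _) hnn1
    _ = (M1 * M2) * ((t - τ) ^ q1 * τ ^ q2) := by ring

lemma intervalIntegrable_cm1 (hg : Cm1 g) (ht : 0 < t) :
    IntervalIntegrable g volume 0 t := by
  rw [intervalIntegrable_iff_integrableOn_Ioc_of_le ht.le]
  have h := integrableOn_conv_integrand cm1_one hg ht
  simp only [one_mul] at h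
  exact h.congr_set_ae (Ioo_ae_eq_Ioc (a := (0:ℝ)) (b := t)).symm

lemma Cm1.conv (hf : Cm1 f) (hg : Cm1 g) : Cm1 (_root_.conv f g) := by
  obtain ⟨q1, hq1, f₁, hf₁, hfe⟩ := hf
  obtain ⟨q2, hq2, g₁, hg₁, hge⟩ := hg
  refine ⟨q1 + q2 + 1, by linarith, fun x => ∫ s in Ioo (0:ℝ) 1,
    ((1 - s) ^ q1 * s ^ q2) * (f₁ (x * (1 - s)) * g₁ (x * s)), ?_, ?_⟩
  · -- continuity of B on Ici 0
    have main : ∀ T : ℝ, 0 ≤ T → ContinuousOn (fun x => ∫ s in Ioo (0:ℝ) 1,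
        ((1 - s) ^ q1 * s ^ q2) * (f₁ (x * (1 - s)) * g₁ (x * s))) (Icc 0 T) := by
      intro T hT
      obtain ⟨M1, hM1⟩ := (isCompact_Icc (a := (0:ℝ)) (b := T)).exists_bound_of_continuousOn
        (hf₁.mono Icc_subset_Ici_self)
      obtain ⟨M2, hM2⟩ := (isCompact_Icc (a := (0:ℝ)) (b := T)).exists_bound_of_continuousOn
        (hg₁.mono Icc_subset_Ici_self)
      have hnn1 : 0 ≤ M1 := le_trans (norm_nonneg (f₁ 0)) (hM1 0 ⟨le_refl _, hT⟩)
      have hnn2 : 0 ≤ M2 := le_trans (norm_nonneg (g₁ 0)) (hM2 0 ⟨le_refl _, hT⟩)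
      refine MeasureTheory.continuousOn_of_dominated
          (bound := fun s => ((1 - s) ^ q1 * s ^ q2) * (M1 * M2)) ?_ ?_ ?_ ?_
      · intro x hx
        refine ContinuousOn.aestronglyMeasurable ?_ measurableSet_Ioo
        have c1 : ContinuousOn (fun s : ℝ => (1 - s) ^ q1 * s ^ q2) (Ioo 0 1) := by
          intro s hs
          exact ((((continuous_const.sub continuous_id).continuousAt).rpow_const
            (Or.inl (by simp [hs.2]; linarith [hs.2]))).mul
            ((continuousAt_id).rpow_const (Or.inl hs.1.ne'))).continuousWithinAt
        have c2 : ContinuousOn (fun s : ℝ => f₁ (x * (1 - s))) (Ioo 0 1) := by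
          refine hf₁.comp ((continuous_const.mul
            (continuous_const.sub continuous_id)).continuousOn) ?_
          intro s hs
          exact mul_nonneg hx.1 (by linarith [hs.2.le])
        have c3 : ContinuousOn (fun s : ℝ => g₁ (x * s)) (Ioo 0 1) := by
          refine hg₁.comp ((continuous_const.mul continuous_id).continuousOn) ?_
          intro s hs
          exact mul_nonneg hx.1 hs.1.le
        exact c1.mul (c2.mul c3)
      · intro x hx
        filter_upwards [ae_restrict_mem measurableSet_Ioo] with s hs
        have h1s : (0:ℝ) ≤ 1 - s := by linarith [hs.2.le]
        have e1 : 0 ≤ (1 - s) ^ q1 := Real.rpow_nonneg h1s _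
        have e2 : (0:ℝ) ≤ s ^ q2 := Real.rpow_nonneg hs.1.le _
        have m1 : x * (1 - s) ∈ Icc (0:ℝ) T := by
          constructor
          · exact mul_nonneg hx.1 h1s
          · calc x * (1 - s) ≤ x * 1 := by
                  apply mul_le_mul_of_nonneg_left (by linarith [hs.1]) hx.1
              _ ≤ T := by rw [mul_one]; exact hx.2
        have m2 : x * s ∈ Icc (0:ℝ) T := by
          constructor
          · exact mul_nonneg hx.1 hs.1.le
          · calc x * s ≤ x * 1 := mul_le_mul_of_nonneg_left hs.2.le hx.1
              _ ≤ T := by rw [mul_one]; exact hx.2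
        calc ‖(1 - s) ^ q1 * s ^ q2 * (f₁ (x * (1 - s)) * g₁ (x * s))‖
            = ((1 - s) ^ q1 * s ^ q2) * (|f₁ (x * (1 - s))| * |g₁ (x * s)|) := by
              rw [Real.norm_eq_abs, abs_mul, abs_mul, abs_mul,
                abs_of_nonneg e1, abs_of_nonneg e2]
          _ ≤ ((1 - s) ^ q1 * s ^ q2) * (M1 * M2) := by
              apply mul_le_mul_of_nonneg_left _ (mul_nonneg e1 e2)
              exact mul_le_mul (hM1 _ m1) (hM2 _ m2) (abs_nonneg _) hnn1
      · exact (integrableOn_rpow_rpow hq1 hq2 one_pos).mul_const _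
      · filter_upwards [ae_restrict_mem measurableSet_Ioo] with s hs
        refine continuousOn_const.mul (ContinuousOn.mul ?_ ?_)
        · refine hf₁.comp ((continuous_mul_right _).continuousOn) ?_
          intro x hx
          exact mul_nonneg hx.1 (by linarith [hs.2.le])
        · refine hg₁.comp ((continuous_mul_right _).continuousOn) ?_
          intro x hx
          exact mul_nonneg hx.1 hs.1.le
    intro x hx
    have hx0 : (0:ℝ) ≤ x := hx
    have h1 : ContinuousWithinAt (fun x => ∫ s in Ioo (0:ℝ) 1,
        ((1 - s) ^ q1 * s ^ q2) * (f₁ (x * (1 - s)) * g₁ (x * s))) (Icc 0 (x+1)) x :=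
      main (x+1) (by linarith) x ⟨hx0, by linarith⟩
    refine h1.mono_of_mem_nhdsWithin ?_
    refine Filter.mem_of_superset (inter_mem_nhdsWithin (Ici 0) (Iio_mem_nhds (lt_add_one x))) ?_
    exact fun y hy => ⟨hy.1, hy.2.le⟩
  · intro x hx
    have key : _root_.conv f g x = ∫ τ in (0:ℝ)..x,
        (fun τ => ((x - τ) ^ q1 * f₁ (x - τ)) * (τ ^ q2 * g₁ τ)) τ := by
      rw [conv_eq_Ioo f g hx.le, intervalIntegral.integral_of_le hx.le,
        integral_Ioc_eq_integral_Ioo]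
      exact setIntegral_congr_fun measurableSet_Ioo fun τ hτ => by
        rw [hfe (x - τ) (by simp [hτ.2]), hge τ hτ.1]
    have subst := intervalIntegral.smul_integral_comp_mul_left
      (fun τ => ((x - τ) ^ q1 * f₁ (x - τ)) * (τ ^ q2 * g₁ τ)) (a := 0) (b := 1) x
    simp only [mul_zero, mul_one] at subst
    rw [key, ← subst, intervalIntegral.integral_of_le zero_le_one,
      integral_Ioc_eq_integral_Ioo]
    have congr1 : ∀ s ∈ Ioo (0:ℝ) 1,
        (fun τ => ((x - τ) ^ q1 * f₁ (x - τ)) * (τ ^ q2 * g₁ τ)) (x * s)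
          = (x ^ q1 * x ^ q2) *
            (((1 - s) ^ q1 * s ^ q2) * (f₁ (x * (1 - s)) * g₁ (x * s))) := by
      intro s hs
      have h1s : (0:ℝ) ≤ 1 - s := by linarith [hs.2.le]
      have e0 : x - x * s = x * (1 - s) := by ring
      simp only [e0]
      rw [Real.mul_rpow hx.le h1s, Real.mul_rpow hx.le hs.1.le]
      ring
    rw [setIntegral_congr_fun measurableSet_Ioo congr1, MeasureTheory.integral_const_mul]
    rw [smul_eq_mul, Real.rpow_add hx, Real.rpow_add hx, Real.rpow_one]
    ring

set_option maxHeartbeats 2000000 in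
lemma conv_assoc (hf : Cm1 f) (hg : Cm1 g) (hp : Cm1 p) (ht : 0 < t) :
    _root_.conv f (_root_.conv g p) t = _root_.conv (_root_.conv f g) p t := by
  classical
  obtain ⟨S, hS⟩ : ∃ S : Set (ℝ × ℝ), S = {x | 0 < x.2 ∧ x.2 < x.1 ∧ x.1 < t} := ⟨_, rfl⟩
  obtain ⟨c, hc⟩ : ∃ c : ℝ × ℝ → ℝ,
    c = fun x => f (t - x.1) * (g (x.1 - x.2) * p x.2) := ⟨_, rfl⟩
  obtain ⟨F, hF⟩ : ∃ F : ℝ × ℝ → ℝ, F = S.indicator c := ⟨_, rfl⟩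
  have hSopen : IsOpen S := by
    rw [hS]
    apply IsOpen.inter (isOpen_lt continuous_const continuous_snd)
    exact (isOpen_lt continuous_snd continuous_fst).inter
      (isOpen_lt continuous_fst continuous_const)
  have hSmeas : MeasurableSet S := hSopen.measurableSet
  -- slice descriptions
  have slice_fst : ∀ τ : ℝ, τ < t →
      (fun σ => F (τ, σ)) = (Ioo 0 τ).indicator (fun σ => c (τ, σ)) := by
    intro τ hτt
    funext σ
    rw [hF, hS]
    simp only [Set.indicator_apply, mem_setOf_eq, mem_Ioo]
    exact if_congr (by tauto) rfl rfl
  have slice_fst0 : ∀ τ : ℝ, τ ∉ Ioo 0 t → (fun σ => F (τ, σ)) = fun _ => 0 := by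
    intro τ hτ
    funext σ
    rw [hF, hS]
    simp only [Set.indicator_apply, mem_setOf_eq]
    exact if_neg (fun h => hτ ⟨h.1.trans h.2.1, h.2.2⟩)
  have slice_snd : ∀ σ : ℝ, 0 < σ →
      (fun τ => F (τ, σ)) = (Ioo σ t).indicator (fun τ => c (τ, σ)) := by
    intro σ hσ
    funext τ
    rw [hF, hS]
    simp only [Set.indicator_apply, mem_setOf_eq, mem_Ioo]
    exact if_congr (by tauto) rfl rfl
  have slice_snd0 : ∀ σ : ℝ, σ ∉ Ioo 0 t → (fun τ => F (τ, σ)) = fun _ => 0 := by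
    intro σ hσ
    funext τ
    rw [hF, hS]
    simp only [Set.indicator_apply, mem_setOf_eq]
    exact if_neg (fun h => hσ ⟨h.1, h.2.1.trans h.2.2⟩)
  -- integrability of F on the product
  have hFmeas : AEStronglyMeasurable F (volume.prod volume) := by
    rw [hF, aestronglyMeasurable_indicator_iff hSmeas]
    obtain ⟨q1, hq1, f₁, hf₁, hfe⟩ := hf
    obtain ⟨q2, hq2, g₁, hg₁, hge⟩ := hg
    obtain ⟨q3, hq3, p₁, hp₁, hpe⟩ := hp
    refine ContinuousOn.aestronglyMeasurable ?_ hSmeas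
    have hform : ContinuousOn (fun x : ℝ × ℝ =>
        ((t - x.1) ^ q1 * f₁ (t - x.1)) *
        (((x.1 - x.2) ^ q2 * g₁ (x.1 - x.2)) * ((x.2) ^ q3 * p₁ x.2))) S := by
      intro x hx
      rw [hS] at hx
      obtain ⟨h1, h2, h3⟩ := hx
      have ha : (0:ℝ) < t - x.1 := by simp only [sub_pos]; exact h3
      have hb : (0:ℝ) < x.1 - x.2 := by simp only [sub_pos]; exact h2
      have ca : ContinuousAt (fun x : ℝ × ℝ => (t - x.1) ^ q1 * f₁ (t - x.1)) x := by
        refine ContinuousAt.mul ?_ ?_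
        · exact ((continuous_const.sub continuous_fst).continuousAt).rpow_const (Or.inl ha.ne')
        · have : ContinuousAt (f₁ ∘ (fun x : ℝ × ℝ => t - x.1)) x :=
            ContinuousAt.comp (g := f₁) (f := fun x : ℝ × ℝ => t - x.1) (x := x)
              (hf₁.continuousAt (Ici_mem_nhds ha))
              ((continuous_const.sub continuous_fst).continuousAt)
          exact this
      have cb : ContinuousAt (fun x : ℝ × ℝ => (x.1 - x.2) ^ q2 * g₁ (x.1 - x.2)) x := by
        refine ContinuousAt.mul ?_ ?_
        · exact ((continuous_fst.sub continuous_snd).continuousAt).rpow_const (Or.inl hb.ne')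
        · have : ContinuousAt (g₁ ∘ (fun x : ℝ × ℝ => x.1 - x.2)) x :=
            ContinuousAt.comp (g := g₁) (f := fun x : ℝ × ℝ => x.1 - x.2) (x := x)
              (hg₁.continuousAt (Ici_mem_nhds hb))
              ((continuous_fst.sub continuous_snd).continuousAt)
          exact this
      have cc : ContinuousAt (fun x : ℝ × ℝ => (x.2) ^ q3 * p₁ x.2) x := by
        refine ContinuousAt.mul ?_ ?_
        · exact (continuous_snd.continuousAt).rpow_const (Or.inl h1.ne')
        · have : ContinuousAt (p₁ ∘ (fun x : ℝ × ℝ => x.2)) x :=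
            ContinuousAt.comp (g := p₁) (f := fun x : ℝ × ℝ => x.2) (x := x)
              (hp₁.continuousAt (Ici_mem_nhds h1)) continuous_snd.continuousAt
          exact this
      exact (ca.mul (cb.mul cc)).continuousWithinAt
    refine hform.congr fun x hx => ?_
    rw [hS] at hx
    obtain ⟨h1, h2, h3⟩ := hx
    rw [hc]
    show f (t - x.1) * (g (x.1 - x.2) * p x.2) = _
    rw [hfe (t - x.1) (by simp only [sub_pos]; exact h3),
      hge (x.1 - x.2) (by simp only [sub_pos]; exact h2), hpe x.2 h1]
  have hFslice : ∀ τ : ℝ, Integrable (fun σ => F (τ, σ)) volume := by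
    intro τ
    by_cases hτ : τ ∈ Ioo 0 t
    · rw [slice_fst τ hτ.2]
      refine IntegrableOn.integrable_indicator ?_ measurableSet_Ioo
      have h1 : IntegrableOn (fun σ => g (τ - σ) * p σ) (Ioo 0 τ) :=
        integrableOn_conv_integrand hg hp hτ.1
      have hceq : (fun σ => c (τ, σ)) = fun σ => f (t - τ) * (g (τ - σ) * p σ) := by
        rw [hc]
      rw [hceq]
      exact h1.const_mul (f (t - τ))
    · rw [slice_fst0 τ hτ]
      exact integrable_zero _ _ _
  have normint : ∀ τ : ℝ, (∫ σ, ‖F (τ, σ)‖) = (Ioo 0 t).indicator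
      (fun τ => |f (t - τ)| * _root_.conv (fun x => |g x|) (fun x => |p x|) τ) τ := by
    intro τ
    by_cases hτ : τ ∈ Ioo 0 t
    · rw [Set.indicator_of_mem hτ]
      have e1 : (fun σ => ‖F (τ, σ)‖)
          = (Ioo 0 τ).indicator (fun σ => ‖c (τ, σ)‖) := by
        funext σ
        rw [congrFun (slice_fst τ hτ.2) σ, norm_indicator_eq_indicator_norm]
      rw [e1, MeasureTheory.integral_indicator measurableSet_Ioo]
      have e2 : ∀ σ ∈ Ioo 0 τ, ‖c (τ, σ)‖ = |f (t - τ)| * (|g (τ - σ)| * |p σ|) := by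
        intro σ hσ
        rw [hc]
        show ‖f (t - τ) * (g (τ - σ) * p σ)‖ = _
        rw [Real.norm_eq_abs, abs_mul, abs_mul]
      rw [setIntegral_congr_fun measurableSet_Ioo e2, MeasureTheory.integral_const_mul]
      congr 1
      rw [conv_eq_Ioo _ _ hτ.1.le]
    · rw [Set.indicator_of_notMem hτ]
      have e0 : (fun σ => ‖F (τ, σ)‖) = fun _ => (0:ℝ) := by
        funext σ
        rw [congrFun (slice_fst0 τ hτ) σ, norm_zero]
      rw [show (∫ σ, ‖F (τ, σ)‖) = ∫ σ, (fun _ : ℝ => (0:ℝ)) σ from by rw [← e0]]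
      simp
  have hFint : Integrable F (volume.prod volume) := by
    refine (MeasureTheory.integrable_prod_iff hFmeas).2 ⟨?_, ?_⟩
    · exact Filter.Eventually.of_forall hFslice
    · have h1 : Integrable ((Ioo 0 t).indicator
          (fun τ => |f (t - τ)| * _root_.conv (fun x => |g x|) (fun x => |p x|) τ)) volume := by
        refine IntegrableOn.integrable_indicator ?_ measurableSet_Ioo
        exact integrableOn_conv_integrand (f := fun x => |f x|)
          (g := _root_.conv (fun x => |g x|) (fun x => |p x|))
          (Cm1.abs hf) (Cm1.conv (Cm1.abs hg) (Cm1.abs hp)) ht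
      exact h1.congr (Filter.Eventually.of_forall fun τ => (normint τ).symm)
  -- Fubini
  have swap : (∫ τ, ∫ σ, F (τ, σ)) = ∫ σ, ∫ τ, F (τ, σ) :=
    MeasureTheory.integral_integral_swap (f := fun τ σ => F (τ, σ)) hFint
  -- LHS
  have lhs : _root_.conv f (_root_.conv g p) t = ∫ τ, ∫ σ, F (τ, σ) := by
    rw [conv_eq_Ioo _ _ ht.le]
    rw [show (∫ τ, ∫ σ, F (τ, σ)) = ∫ τ in Ioo 0 t, ∫ σ, F (τ, σ) from
      (setIntegral_eq_integral_of_forall_compl_eq_zero (fun τ hτ => by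
        rw [slice_fst0 τ hτ]; simp)).symm]
    refine setIntegral_congr_fun measurableSet_Ioo fun τ hτ => ?_
    rw [show (fun σ => F (τ, σ)) = (Ioo 0 τ).indicator (fun σ => c (τ, σ)) from
      slice_fst τ hτ.2, MeasureTheory.integral_indicator measurableSet_Ioo]
    rw [conv_eq_Ioo g p hτ.1.le]
    simp only [hc]
    rw [MeasureTheory.integral_const_mul]
  -- RHS
  have rhs : (∫ σ, ∫ τ, F (τ, σ)) = _root_.conv (_root_.conv f g) p t := by
    rw [conv_eq_Ioo _ _ ht.le]
    rw [show (∫ σ, ∫ τ, F (τ, σ)) = ∫ σ in Ioo 0 t, ∫ τ, F (τ, σ) from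
      (setIntegral_eq_integral_of_forall_compl_eq_zero (fun σ hσ => by
        rw [slice_snd0 σ hσ]; simp)).symm]
    refine setIntegral_congr_fun measurableSet_Ioo fun σ hσ => ?_
    rw [show (fun τ => F (τ, σ)) = (Ioo σ t).indicator (fun τ => c (τ, σ)) from
      slice_snd σ hσ.1, MeasureTheory.integral_indicator measurableSet_Ioo]
    have e3 : ∀ τ ∈ Ioo σ t, c (τ, σ)
        = (fun u => f ((t - σ) - u) * g u) (τ - σ) * p σ := by
      intro τ hτ
      rw [hc]
      show f (t - τ) * (g (τ - σ) * p σ) = f ((t - σ) - (τ - σ)) * g (τ - σ) * p σ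
      rw [show (t - σ) - (τ - σ) = t - τ by ring]
      ring
    rw [setIntegral_congr_fun measurableSet_Ioo e3]
    rw [MeasureTheory.integral_mul_const]
    congr 1
    have e4 : (∫ τ in Ioo σ t, (fun u => f ((t - σ) - u) * g u) (τ - σ))
        = ∫ τ in σ..t, (fun u => f ((t - σ) - u) * g u) (τ - σ) := by
      rw [intervalIntegral.integral_of_le hσ.2.le, integral_Ioc_eq_integral_Ioo]
    rw [e4, intervalIntegral.integral_comp_sub_right (fun u => f ((t - σ) - u) * g u) σ]
    simp only [sub_self]
    rfl
  rw [lhs, swap, rhs]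

lemma cm1_hker {x : ℝ} (hx : 0 < x) : Cm1 (hker x) := by
  refine ⟨x - 1, by linarith, fun _ => (Real.Gamma x)⁻¹, continuousOn_const, fun t ht => ?_⟩
  rw [hker, div_eq_mul_inv]

lemma conv_hker_one (g : ℝ → ℝ) (u : ℝ) :
    _root_.conv (hker 1) g u = ∫ τ in (0:ℝ)..u, g τ := by
  unfold conv hker
  simp [Real.Gamma_one]

lemma hker_succ {x s : ℝ} (hx : 0 < x) (hs : 0 < s) :
    _root_.conv (hker 1) (hker x) s = hker (x + 1) s := by
  rw [conv_hker_one]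
  have hΓ : Real.Gamma x ≠ 0 := ne_of_gt (Real.Gamma_pos_of_pos hx)
  have hr : (-1:ℝ) < x - 1 := by linarith
  unfold hker
  rw [intervalIntegral.integral_div, integral_rpow (Or.inl hr),
    Real.zero_rpow (by intro h; rw [sub_add_cancel] at h; exact hx.ne' h),
    Real.Gamma_add_one hx.ne']
  rw [show x - 1 + 1 = x by ring, show x + 1 - 1 = x by ring]
  field_simp
  simp

lemma hasDerivAt_primitive (hg : Cm1 g) (ht : 0 < t) :
    HasDerivAt (fun u => ∫ τ in (0:ℝ)..u, g τ) (g t) t := by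
  refine intervalIntegral.integral_hasDerivAt_right (intervalIntegrable_cm1 hg ht)
    ?_ (Cm1.continuousAt hg ht)
  exact ContinuousAt.stronglyMeasurableAtFilter isOpen_Ioi
    (fun x hx => Cm1.continuousAt hg hx) t ht

lemma deriv_conv_hker_succ (hψ : Cm1 ψ) {x : ℝ} (hx : 0 < x) (ht : 0 < t) :
    HasDerivAt (_root_.conv (hker (x+1)) ψ) (_root_.conv (hker x) ψ t) t := by
  have hΦ : Cm1 (_root_.conv (hker x) ψ) := Cm1.conv (cm1_hker hx) hψ
  have key : ∀ u, 0 < u → _root_.conv (hker (x+1)) ψ u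
      = ∫ τ in (0:ℝ)..u, _root_.conv (hker x) ψ τ := by
    intro u hu
    have h1 : _root_.conv (hker (x+1)) ψ u
        = _root_.conv (_root_.conv (hker 1) (hker x)) ψ u :=
      (conv_congr_left ψ hu fun τ h0 _ => hker_succ hx h0).symm
    rw [h1, ← conv_assoc (cm1_hker one_pos) (cm1_hker hx) hψ hu, conv_hker_one]
  exact (hasDerivAt_primitive hΦ ht).congr_of_eventuallyEq
    (eventuallyEq_of_mem (Ioi_mem_nhds ht) fun u hu => key u hu)

lemma iteratedDeriv_congr_Ioi : ∀ (i : ℕ) {F G : ℝ → ℝ},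
    (∀ s, 0 < s → F s = G s) → ∀ t, 0 < t → iteratedDeriv i F t = iteratedDeriv i G t := by
  intro i
  induction i with
  | zero => intro F G h t ht; simpa using h t ht
  | succ i ih =>
    intro F G h t ht
    rw [iteratedDeriv_succ', iteratedDeriv_succ']
    refine ih (fun s hs => Filter.EventuallyEq.deriv_eq
      (eventuallyEq_of_mem (Ioi_mem_nhds hs) fun u hu => h u hu)) t ht

lemma iteratedDeriv_conv_hker : ∀ (j : ℕ), 1 ≤ j → ∀ {ψ : ℝ → ℝ}, Cm1 ψ →
    ∀ t, 0 < t → iteratedDeriv j (_root_.conv (hker j) ψ) t = ψ t := by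
  intro j
  induction j with
  | zero => intro h; omega
  | succ j ih =>
    intro _ ψ hψ t ht
    rcases Nat.eq_zero_or_pos j with hj0 | hjpos
    · subst hj0
      rw [iteratedDeriv_one]
      have e : _root_.conv (hker ((0:ℕ)+1:ℕ)) ψ = fun u => ∫ τ in (0:ℝ)..u, ψ τ := by
        funext u
        rw [show (((0:ℕ)+1:ℕ):ℝ) = 1 by norm_num, conv_hker_one]
      rw [e]
      exact (hasDerivAt_primitive hψ ht).deriv
    · rw [iteratedDeriv_succ']
      have hd : ∀ s, 0 < s →
          deriv (_root_.conv (hker ((j:ℕ)+1:ℕ)) ψ) s = _root_.conv (hker j) ψ s := by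
        intro s hs
        have hj' : (0:ℝ) < (j:ℝ) := by exact_mod_cast hjpos
        have := (deriv_conv_hker_succ hψ hj' hs).deriv
        rw [← this]
        congr 1
        rw [show (((j:ℕ)+1:ℕ):ℝ) = (j:ℝ) + 1 by push_cast; ring]
      rw [iteratedDeriv_congr_Ioi j hd t ht]
      exact ih hjpos hψ t ht

end GFCaux


open Set in
/-- the `m`-fold sequential GFD is a right inverse of the `m`-fold
GFI on `C^m_{-1,(κ)}(0,∞) = I^{<m>}_{(κ)}(C_{-1}(0,∞))`. -/
theorem seq_GFD_right_inverse_mfold_GFI (n m : ℕ) (hn : 0 < n) (hm : 0 < m)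
    (κ k : ℝ → ℝ) (hκk : SonineL n κ k) (f φ : ℝ → ℝ) (hφ : Cm1 φ)
    (hf : ∀ t : ℝ, 0 < t → f t = conv (convPow κ m) φ t) :
    ∀ t : ℝ, 0 < t → conv (convPow κ m) ((GFD n k)^[m] f) t = f t := by
  obtain ⟨m', rfl⟩ : ∃ m', m = m' + 1 :=
    ⟨m - 1, (Nat.succ_pred_eq_of_pos hm).symm⟩
  obtain ⟨hκ, hk0, hson⟩ := hκk
  have hk : Cm1 k := by
    obtain ⟨q, h1, _, r⟩ := hk0
    exact ⟨q, h1, r⟩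
  obtain ⟨F, hF0, hFs⟩ : ∃ F : ℕ → ℝ → ℝ, F 0 = φ ∧
      ∀ j, F (j+1) = conv κ (F j) :=
    ⟨fun j => Nat.rec φ (fun _ Fj => conv κ Fj) j, rfl, fun _ => rfl⟩
  have hcm1F : ∀ j, Cm1 (F j) := by
    intro j
    induction j with
    | zero => rw [hF0]; exact hφ
    | succ j ih => rw [hFs]; exact GFCaux.Cm1.conv hκ ih
  have hcm1P : ∀ j, Cm1 (convPow κ (j+1)) := by
    intro j
    induction j with
    | zero => exact hκ
    | succ j ih => exact GFCaux.Cm1.conv hκ ih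
  have hFP : ∀ j, ∀ t : ℝ, 0 < t → conv (convPow κ (j+1)) φ t = F (j+1) t := by
    intro j
    induction j with
    | zero => intro t ht; rw [hFs, hF0]; rfl
    | succ j ih =>
      intro t ht
      have h1 : conv (convPow κ (j+1+1)) φ t
          = conv κ (conv (convPow κ (j+1)) φ) t :=
        (GFCaux.conv_assoc hκ (hcm1P j) hφ ht).symm
      rw [h1, GFCaux.conv_congr_right κ ht (fun τ h0 _ => ih τ h0), hFs (j+1)]
  have main1 : ∀ j, ∀ t : ℝ, 0 < t → GFD n k (F (j+1)) t = F j t := by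
    intro j t ht
    have hconv : ∀ u, 0 < u → conv k (F (j+1)) u = conv (hker n) (F j) u := by
      intro u hu
      have e1 : conv k (F (j+1)) u = conv k (conv κ (F j)) u := by rw [hFs]
      have e2 : conv k (conv κ (F j)) u = conv (conv k κ) (F j) u :=
        GFCaux.conv_assoc hk hκ (hcm1F j) hu
      have e3 : conv (conv k κ) (F j) u = conv (hker n) (F j) u :=
        GFCaux.conv_congr_left (F j) hu fun τ h0 _ => by
          rw [GFCaux.conv_comm k κ, hson τ h0]
      rw [e1, e2, e3]
    show iteratedDeriv n (conv k (F (j+1))) t = F j t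
    rw [GFCaux.iteratedDeriv_congr_Ioi n hconv t ht]
    exact GFCaux.iteratedDeriv_conv_hker n hn (hcm1F j) t ht
  have main2 : ∀ j, j ≤ m' + 1 → ∀ t : ℝ, 0 < t →
      (GFD n k)^[j] f t = F (m' + 1 - j) t := by
    intro j
    induction j with
    | zero =>
      intro _ t ht
      simp only [Function.iterate_zero, id_eq, Nat.sub_zero]
      rw [hf t ht]
      exact hFP m' t ht
    | succ j ih =>
      intro hjm t ht
      rw [Function.iterate_succ_apply']
      have hGe := ih (Nat.le_of_succ_le hjm)
      have hms : m' + 1 - j = (m' + 1 - (j+1)) + 1 := by omega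
      show iteratedDeriv n (conv k ((GFD n k)^[j] f)) t = _
      have hcg : ∀ u, 0 < u → conv k ((GFD n k)^[j] f) u
          = conv k (F (m' + 1 - j)) u := fun u hu =>
        GFCaux.conv_congr_right k hu (fun τ h0 _ => hGe τ h0)
      rw [GFCaux.iteratedDeriv_congr_Ioi n hcg t ht, hms]
      exact main1 (m' + 1 - (j+1)) t ht
  intro t ht
  rw [GFCaux.conv_congr_right (convPow κ (m'+1)) ht (fun τ h0 _ => by
    rw [main2 (m'+1) le_rfl τ h0, Nat.sub_self, hF0])]
  exact (hf t ht).symm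
end
end
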